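/- arXiv:0810.5481 — 7 statements merged into one kernel-verified Lean document; each statement's English description precedes it below -/
import Mathlib

section
/- Let 𝒰 = {U_α : α ∈ A} be a cover of a topological space X by subspaces each of which is a Dold space (in the subspace topology). If 𝒰 admits a numerable refinement 𝒱 = {V_j : j ∈ J} (a numerable cover of X with each V_j contained in some U_α), then X is a Dold space. -/
open unitInterval

universe u v w

/-- A partition of unity: continuous `[0,1]`-valued maps whose pointwise sum is `1`. -/
def IsPartitionOfUnity {ι : Type*} {X : Type*} [TopologicalSpace X]
    (f : ι → X → ℝ) : Prop :=
  (∀ i, Continuous (f i)) ∧ (∀ i x, f i x ∈ Set.Icc (0 : ℝ) 1) ∧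
    ∀ x, HasSum (fun i => f i x) 1

/-- A cover is numerable if it admits a subordinate partition of unity with
locally finite supports. -/
def IsNumerableCover {ι : Type*} {X : Type*} [TopologicalSpace X]
    (U : ι → Set X) : Prop :=
  ∃ f : ι → X → ℝ, IsPartitionOfUnity f ∧
    LocallyFinite (fun i => closure (Function.support (f i))) ∧
    ∀ i, closure (Function.support (f i)) ⊆ U i

/-- `U` is ambiently contractible to `x₀`: the inclusion `U → X` is homotopic to the
constant map at `x₀`. -/
def AmbientlyContractibleTo {X : Type*} [TopologicalSpace X] (U : Set X) (x₀ : X) : Prop :=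
  ContinuousMap.Homotopic
    (⟨Subtype.val, continuous_subtype_val⟩ : C(U, X))
    (ContinuousMap.const ↥U x₀)

/-- `U ⊆ X` is ambiently contractible: the inclusion `U → X` is nullhomotopic. -/
def AmbientlyContractible {X : Type*} [TopologicalSpace X] (U : Set X) : Prop :=
  ∃ x₀ : X, AmbientlyContractibleTo U x₀

/-- A Dold space (numerably contractible space): a space admitting a numerable cover
by ambiently contractible subsets. -/
def IsDoldSpace (X : Type u) [TopologicalSpace X] : Prop :=
  ∃ (ι : Type u) (U : ι → Set X),
    (∀ x, ∃ i, x ∈ U i) ∧ IsNumerableCover U ∧ ∀ i, AmbientlyContractible (U i)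

lemma ambc_singleton {X : Type*} [TopologicalSpace X] (x₀ : X) :
    AmbientlyContractible ({x₀} : Set X) := by
  refine ⟨x₀, ?_⟩
  have h : (⟨Subtype.val, continuous_subtype_val⟩ : C(({x₀} : Set X), X)) =
      ContinuousMap.const _ x₀ := ContinuousMap.ext fun u => u.2
  rw [AmbientlyContractibleTo, h]

lemma ambc_image {X : Type*} [TopologicalSpace X] {U : Set X} {C : Set U}
    (h : AmbientlyContractible C) :
    AmbientlyContractible (Subtype.val '' C : Set X) := by
  obtain ⟨x₀, hx₀⟩ := h
  refine ⟨(x₀ : X), ?_⟩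
  have hU : ∀ y : ↥(Subtype.val '' C), y.1 ∈ U := fun y => by
    obtain ⟨a, -, h2⟩ := y.2; exact h2 ▸ a.2
  have hC : ∀ y : ↥(Subtype.val '' C), (⟨y.1, hU y⟩ : ↥U) ∈ C := fun y => by
    obtain ⟨a, ha, h2⟩ := y.2
    have : (⟨y.1, hU y⟩ : ↥U) = a := Subtype.ext h2.symm
    rw [this]; exact ha
  let m : C(↥(Subtype.val '' C), ↥C) :=
    ⟨fun y => ⟨⟨y.1, hU y⟩, hC y⟩, by
      exact Continuous.subtype_mk (Continuous.subtype_mk continuous_subtype_val _) _⟩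
  let vmap : C(↥U, X) := ⟨Subtype.val, continuous_subtype_val⟩
  have h1 := ContinuousMap.Homotopic.comp
    (ContinuousMap.Homotopic.comp (ContinuousMap.Homotopic.refl vmap) hx₀) (ContinuousMap.Homotopic.refl m)
  have e1 : (vmap.comp ((⟨Subtype.val, continuous_subtype_val⟩ : C(↥C, ↥U)).comp m)) =
      (⟨Subtype.val, continuous_subtype_val⟩ : C(↥(Subtype.val '' C), X)) := by
    ext y; rfl
  have e2 : (vmap.comp ((ContinuousMap.const ↥C x₀).comp m)) =
      ContinuousMap.const ↥(Subtype.val '' C) (x₀ : X) := by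
    ext y; rfl
  rw [AmbientlyContractibleTo, ← e1, ← e2]
  exact h1

/-- Reindexing lemma: a numerable cover by ambiently contractible sets, over an
arbitrary index type, makes the space Dold. -/
lemma isDoldSpace_of_cover {X : Type u} [TopologicalSpace X] {ι : Type v}
    (W : ι → Set X) (hnum : IsNumerableCover W)
    (hcontr : ∀ i, AmbientlyContractible (W i)) : IsDoldSpace X := by
  rcases isEmpty_or_nonempty X with hX | hX
  · exact ⟨X, fun _ => Set.univ, fun x => hX.elim x,
      ⟨fun _ _ => 0, ⟨fun _ => continuous_const, fun i => hX.elim i, fun x => hX.elim x⟩,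
        fun x => hX.elim x, fun i => hX.elim i⟩,
      fun i => hX.elim i⟩
  obtain ⟨f, ⟨hfc, hf01, hfsum⟩, hflf, hfsub⟩ := hnum
  set x₀ := Classical.arbitrary X with hx₀
  set G : X → Set ι := fun x => {t : ι | x ∈ closure (Function.support (f t))} with hGdef
  have hG : ∀ x : X, (G x).Finite := by
    intro x
    obtain ⟨N, hN, hfin⟩ := hflf x
    exact hfin.subset fun t ht => ⟨x, ht, mem_of_mem_nhds hN⟩
  have hEx : ∀ x, ∃ e : ι → ℕ, Set.InjOn e (G x) := by
    intro x
    classical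
    obtain ⟨e, he⟩ := Set.countable_iff_exists_injective.mp (hG x).countable
    refine ⟨fun t => if h : t ∈ G x then e ⟨t, h⟩ else 0, fun a ha b hb hab => ?_⟩
    simp only at hab
    rw [dif_pos ha, dif_pos hb] at hab
    exact congrArg Subtype.val (he hab)
  choose E hE using hEx
  have hptx : ∀ t : {t : ι // f t ≠ 0}, ∃ y, f t.1 y ≠ 0 := fun t => Function.ne_iff.mp t.2
  choose pt hpt using hptx
  have hmem : ∀ t : {t : ι // f t ≠ 0}, t.1 ∈ G (pt t) :=
    fun t => subset_closure (hpt t)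
  let ψ : {t : ι // f t ≠ 0} → X × ℕ := fun t => (pt t, E (pt t) t.1)
  have hψ : Function.Injective ψ := by
    intro t t' h
    have h1 : pt t = pt t' := congrArg Prod.fst h
    have h2 : E (pt t) t.1 = E (pt t) t'.1 := by
      have h3 := congrArg Prod.snd h
      simp only [ψ] at h3
      rw [← h1] at h3
      exact h3
    have hmem' : t'.1 ∈ G (pt t) := by rw [h1]; exact hmem t'
    exact Subtype.ext (hE (pt t) (hmem t) hmem' h2)
  set F : X × ℕ → X → ℝ := Function.extend ψ (fun t => f t.1) 0 with hF
  set W' : X × ℕ → Set X := Function.extend ψ (fun t => W t.1) (fun _ => {x₀}) with hW'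
  have hFψ : ∀ t, F (ψ t) = f t.1 := fun t => hψ.extend_apply _ _ t
  have hWψ : ∀ t, W' (ψ t) = W t.1 := fun t => hψ.extend_apply _ _ t
  have hFout : ∀ b ∉ Set.range ψ, F b = 0 := fun b hb =>
    Function.extend_apply' _ _ _ (by rwa [Set.mem_range] at hb)
  have hWout : ∀ b ∉ Set.range ψ, W' b = {x₀} := fun b hb =>
    Function.extend_apply' _ _ _ (by rwa [Set.mem_range] at hb)
  refine ⟨X × ℕ, W', ?_, ⟨F, ⟨?_, ?_, ?_⟩, ?_, ?_⟩, ?_⟩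
  · -- cover
    intro x
    have hex : ∃ i, f i x ≠ 0 := by
      by_contra hc
      push_neg at hc
      have h0 : HasSum (fun i => f i x) 0 := by
        simpa [funext hc] using (hasSum_zero : HasSum (fun _ : ι => (0:ℝ)) 0)
      exact one_ne_zero ((hfsum x).unique h0)
    obtain ⟨i, hi⟩ := hex
    have hine : f i ≠ 0 := fun h0 => hi (by rw [h0]; rfl)
    refine ⟨ψ ⟨i, hine⟩, ?_⟩
    rw [hWψ]
    exact hfsub i (subset_closure hi)
  · -- continuity
    intro b
    by_cases hb : b ∈ Set.range ψ
    · obtain ⟨t, rfl⟩ := hb; rw [hFψ]; exact hfc _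
    · rw [hFout b hb]; exact continuous_const
  · -- Icc
    intro b x
    by_cases hb : b ∈ Set.range ψ
    · obtain ⟨t, rfl⟩ := hb; rw [hFψ]; exact hf01 _ _
    · rw [hFout b hb]; exact ⟨le_refl 0, zero_le_one⟩
  · -- HasSum
    intro x
    have h1 : HasSum (fun t : {t : ι // f t ≠ 0} => f t.1 x) 1 := by
      refine (hasSum_subtype_iff_of_support_subset ?_).mpr (hfsum x)
      intro i hi
      exact fun h0 => hi (by simp [h0])
    have h2 : HasSum ((fun b => F b x) ∘ ψ) 1 := by
      have : ((fun b => F b x) ∘ ψ) = fun t : {t : ι // f t ≠ 0} => f t.1 x := by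
        funext t; simp only [Function.comp_apply, hFψ]
      rw [this]; exact h1
    exact (hψ.hasSum_iff (fun b hb => by rw [hFout b hb]; rfl)).mp h2
  · -- LocallyFinite
    intro x
    obtain ⟨N, hN, hfin⟩ := hflf x
    refine ⟨N, hN, ?_⟩
    have hsub : {b : X × ℕ | (closure (Function.support (F b)) ∩ N).Nonempty} ⊆
        ψ '' (Subtype.val ⁻¹' {i | (closure (Function.support (f i)) ∩ N).Nonempty}) := by
      intro b hb
      by_cases hbr : b ∈ Set.range ψ
      · obtain ⟨t, rfl⟩ := hbr
        refine ⟨t, ?_, rfl⟩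
        simpa only [Set.mem_preimage, Set.mem_setOf_eq, ← hFψ t] using hb
      · exfalso
        have : closure (Function.support (F b)) = ∅ := by
          rw [hFout b hbr]; simp
        rw [Set.mem_setOf_eq, this] at hb
        simp at hb
    exact ((hfin.preimage Subtype.val_injective.injOn).image ψ).subset hsub
  · -- subordinate
    intro b
    by_cases hb : b ∈ Set.range ψ
    · obtain ⟨t, rfl⟩ := hb; rw [hFψ, hWψ]; exact hfsub t.1
    · rw [hFout b hb]; simp
  · -- contractible
    intro b
    by_cases hb : b ∈ Set.range ψ
    · obtain ⟨t, rfl⟩ := hb; rw [hWψ]; exact hcontr t.1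
    · rw [hWout b hb]; exact ambc_singleton x₀

/-- a space covered by Dold subspaces with a numerable refinement is Dold. -/
theorem stmt3 {X : Type u} [TopologicalSpace X] {ι : Type*} {κ : Type*}
    (U : ι → Set X) (V : κ → Set X)
    (hUcov : ∀ x, ∃ i, x ∈ U i)
    (hUDold : ∀ i, IsDoldSpace (U i))
    (hVcov : ∀ x, ∃ j, x ∈ V j)
    (hVnum : IsNumerableCover V)
    (href : ∀ j, ∃ i, V j ⊆ U i) :
    IsDoldSpace X := by
  classical
  obtain ⟨f, ⟨hfc, hf01, hfsum⟩, hflf, hfsub⟩ := hVnum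
  choose i hi using href
  have hd : ∀ j, IsDoldSpace (U (i j)) := fun j => hUDold (i j)
  choose sig C hCcov hCnum hCcontr using hd
  choose g hgPU hgLF hgsub using fun j => hCnum j
  -- key pieces
  have hsupU : ∀ j x, f j x ≠ 0 → x ∈ U (i j) :=
    fun j x hx => hi j (hfsub j (subset_closure hx))
  set h : (Σ j : κ, sig j) → X → ℝ := fun p x =>
    f p.1 x * (if hx : x ∈ U (i p.1) then g p.1 p.2 ⟨x, hx⟩ else 0) with hh
  set Wfam : (Σ j : κ, sig j) → Set X := fun p => Subtype.val '' (C p.1 p.2) with hWfam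
  -- support of h p sits inside support of f p.1 and inside val '' support (g ...)
  have hsupp1 : ∀ p : (Σ j : κ, sig j),
      Function.support (h p) ⊆ Function.support (f p.1) := by
    intro p x hx
    intro h0
    apply hx
    simp only [hh, h0, zero_mul]
  have hsupp2 : ∀ p : (Σ j : κ, sig j),
      Function.support (h p) ⊆ Subtype.val '' (Function.support (g p.1 p.2)) := by
    intro p x hx
    have hxU : x ∈ U (i p.1) := hsupU p.1 x (fun h0 => hx (by simp [hh, h0]))
    refine ⟨⟨x, hxU⟩, ?_, rfl⟩
    intro h0
    apply hx
    simp only [hh, dif_pos hxU, h0, mul_zero]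
  have hgd01 : ∀ j k (x : X), (if hx : x ∈ U (i j) then g j k ⟨x, hx⟩ else 0) ∈
      Set.Icc (0:ℝ) 1 := by
    intro j k x
    by_cases hx : x ∈ U (i j)
    · rw [dif_pos hx]; exact (hgPU j).2.1 k ⟨x, hx⟩
    · rw [dif_neg hx]; exact ⟨le_refl 0, zero_le_one⟩
  have hnn : ∀ p (x : X), 0 ≤ h p x :=
    fun p x => mul_nonneg (hf01 p.1 x).1 (hgd01 p.1 p.2 x).1
  have hle : ∀ p (x : X), h p x ≤ f p.1 x := by
    intro p x
    calc h p x ≤ f p.1 x * 1 :=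
          mul_le_mul_of_nonneg_left (hgd01 p.1 p.2 x).2 (hf01 p.1 x).1
    _ = f p.1 x := mul_one _
  -- closure of support facts
  have hclsub : ∀ p : (Σ j : κ, sig j), closure (Function.support (h p)) ⊆ Wfam p := by
    intro p x hx
    have hx1 : x ∈ closure (Function.support (f p.1)) :=
      closure_mono (hsupp1 p) hx
    have hxU : x ∈ U (i p.1) := hi p.1 (hfsub p.1 hx1)
    have hx2 : x ∈ closure (Subtype.val '' (Function.support (g p.1 p.2))) :=
      closure_mono (hsupp2 p) hx
    have hx3 : (⟨x, hxU⟩ : ↥(U (i p.1))) ∈ closure (Function.support (g p.1 p.2)) :=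
      closure_subtype.mpr hx2
    exact ⟨⟨x, hxU⟩, hgsub p.1 p.2 hx3, rfl⟩
  refine isDoldSpace_of_cover Wfam ⟨h, ⟨?_, ?_, ?_⟩, ?_, hclsub⟩ ?_
  · -- continuity
    rintro ⟨j, k⟩
    rw [continuous_iff_continuousAt]
    intro x
    rcases eq_or_lt_of_le ((hf01 j x).1) with h0 | hpos
    · -- f j x = 0 : squeeze
      have hx0 : h ⟨j, k⟩ x = 0 := by
        simp only [hh, ← h0, zero_mul]
      unfold ContinuousAt
      rw [hx0]
      refine tendsto_of_tendsto_of_tendsto_of_le_of_le (g := fun _ => (0:ℝ))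
        (h := f j) tendsto_const_nhds ?_ (fun y => hnn ⟨j, k⟩ y) (fun y => hle ⟨j, k⟩ y)
      have := (hfc j).tendsto x
      rwa [← h0] at this
    · -- f j x > 0
      have hO : IsOpen {y | 0 < f j y} := isOpen_lt continuous_const (hfc j)
      refine ContinuousOn.continuousAt ?_ (hO.mem_nhds hpos)
      have hOsub : ∀ y ∈ {y | 0 < f j y}, y ∈ U (i j) :=
        fun y hy => hsupU j y (ne_of_gt hy)
      rw [continuousOn_iff_continuous_restrict]
      have heq : Set.restrict {y | 0 < f j y} (h ⟨j, k⟩) =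
          fun y : {y | 0 < f j y} => f j y.1 * g j k ⟨y.1, hOsub y.1 y.2⟩ := by
        funext y
        simp only [Set.restrict_apply, hh]
        change f j y.1 * (if h : y.1 ∈ U (i j) then g j k ⟨y.1, h⟩ else 0) = _
        rw [dif_pos (hOsub y.1 y.2)]
      change Continuous (Set.restrict _ (h ⟨j, k⟩))
      rw [heq]
      exact ((hfc j).comp continuous_subtype_val).mul
        (((hgPU j).1 k).comp (Continuous.subtype_mk continuous_subtype_val _))
  · -- Icc
    exact fun p x => ⟨hnn p x, le_trans (hle p x) (hf01 p.1 x).2⟩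
  · -- HasSum
    intro x
    have hfiber : ∀ j, HasSum (fun k => h ⟨j, k⟩ x) (f j x) := by
      intro j
      by_cases hx : x ∈ U (i j)
      · have hs := ((hgPU j).2.2 ⟨x, hx⟩).mul_left (f j x)
        rw [mul_one] at hs
        have : (fun k => h ⟨j, k⟩ x) = fun k => f j x * g j k ⟨x, hx⟩ := by
          funext k; simp only [hh]; rw [dif_pos hx]
        rw [this]; exact hs
      · have hf0 : f j x = 0 := by
          by_contra h'; exact hx (hsupU j x h')
        have : (fun k => h ⟨j, k⟩ x) = fun _ => (0:ℝ) := by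
          funext k; simp only [hh, hf0, zero_mul]
        rw [this, ← hf0 ]
        simpa [hf0] using (hasSum_zero : HasSum (fun _ : sig j => (0:ℝ)) 0)

    have hsummable : Summable (fun p : (Σ j : κ, sig j) => h p x) := by
      rw [summable_sigma_of_nonneg (fun p => hnn p x)]
      refine ⟨fun j => (hfiber j).summable, ?_⟩
      have : (fun j => ∑' k, h ⟨j, k⟩ x) = fun j => f j x :=
        funext fun j => (hfiber j).tsum_eq
      rw [this]
      exact (hfsum x).summable
    exact (hfsum x).sigma_of_hasSum hfiber hsummable
  · -- LocallyFinite
    intro x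
    obtain ⟨N₁, hN₁, hfin₁⟩ := hflf x
    have hOj : ∀ j : κ, ∃ O : Set X, O ∈ nhds x ∧
        {k : sig j | (closure (Function.support (h ⟨j, k⟩)) ∩ O).Nonempty}.Finite := by
      intro j
      by_cases hx : x ∈ U (i j)
      · obtain ⟨M, hM, hfinM⟩ := hgLF j ⟨x, hx⟩
        obtain ⟨O, hO, hOM⟩ := (mem_nhds_subtype _ _ _).mp hM
        refine ⟨O, hO, hfinM.subset ?_⟩
        rintro k ⟨y, hy1, hy2⟩
        have hyU : y ∈ U (i j) := hi j (hfsub j (closure_mono (hsupp1 ⟨j, k⟩) hy1))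
        have hy3 : (⟨y, hyU⟩ : ↥(U (i j))) ∈ closure (Function.support (g j k)) :=
          closure_subtype.mpr (closure_mono (hsupp2 ⟨j, k⟩) hy1)
        exact ⟨⟨y, hyU⟩, hy3, hOM hy2⟩
      · refine ⟨(closure (Function.support (f j)))ᶜ, ?_, ?_⟩
        · refine (isClosed_closure).isOpen_compl.mem_nhds ?_
          intro hxc
          exact hx (hi j (hfsub j hxc))
        · refine Set.Finite.subset (Set.finite_empty) ?_
          rintro k ⟨y, hy1, hy2⟩
          exact absurd (closure_mono (hsupp1 ⟨j, k⟩) hy1) hy2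
    choose O hO hOfin using hOj
    refine ⟨N₁ ∩ ⋂ j ∈ hfin₁.toFinset, O j,
      Filter.inter_mem hN₁ ((Filter.biInter_finset_mem _).mpr fun j _ => hO j), ?_⟩
    have hsubset : {p : (Σ j : κ, sig j) |
        (closure (Function.support (h p)) ∩ (N₁ ∩ ⋂ j ∈ hfin₁.toFinset, O j)).Nonempty} ⊆
        ⋃ j ∈ hfin₁.toFinset, Sigma.mk j ''
          {k : sig j | (closure (Function.support (h ⟨j, k⟩)) ∩ O j).Nonempty} := by
      rintro ⟨j, k⟩ ⟨y, hy1, hy2, hy3⟩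
      have hjS : j ∈ hfin₁.toFinset := by
        rw [Set.Finite.mem_toFinset]
        exact ⟨y, closure_mono (hsupp1 ⟨j, k⟩) hy1, hy2⟩
      have hyO : y ∈ O j := by
        have := Set.mem_iInter₂.mp hy3
        exact this j hjS
      exact Set.mem_biUnion hjS ⟨k, ⟨y, hy1, hyO⟩, rfl⟩
    refine Set.Finite.subset ?_ hsubset
    exact Set.Finite.biUnion (Set.finite_mem_finset _) fun j _ => (hOfin j).image _
  · -- contractible
    exact fun p => ambc_image (hCcontr p.1 p.2)
end

section
/- A topological space X is a Dold space if and only if each of its path components is open in X and is itself a Dold space (in the subspace topology). -/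
open unitInterval

universe u v w

lemma joined_of_homotopy {X : Type*} [TopologicalSpace X] {U : Set X} {x₀ : X}
    (H : ContinuousMap.Homotopy (⟨Subtype.val, continuous_subtype_val⟩ : C(U, X))
      (ContinuousMap.const ↥U x₀)) {u : X} (hu : u ∈ U) : Joined u x₀ := by
  refine ⟨⟨⟨fun t => H (t, ⟨u, hu⟩), ?_⟩, ?_, ?_⟩⟩
  · exact H.continuous.comp (by fun_prop)
  · exact H.apply_zero _
  · exact H.apply_one _

lemma joined_of_ambient {X : Type*} [TopologicalSpace X] {U : Set X} {x₀ : X}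
    (h : AmbientlyContractibleTo U x₀) {u : X} (hu : u ∈ U) : Joined u x₀ := by
  obtain ⟨H⟩ := h
  exact joined_of_homotopy H hu

lemma ambient_of_isEmpty {Y : Type*} [TopologicalSpace Y] (U : Set Y) [IsEmpty ↥U] (y : Y) :
    AmbientlyContractibleTo U y :=
  ⟨{ toFun := fun _ => y
     continuous_toFun := continuous_const
     map_zero_left := fun a => isEmptyElim a
     map_one_left := fun a => isEmptyElim a }⟩

/- ### Forward direction pieces -/

section Forward
variable {X : Type u} [TopologicalSpace X]

lemma exists_pos_of_partition {ι : Type*} {f : ι → X → ℝ}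
    (hf : IsPartitionOfUnity f) (x : X) : ∃ i, 0 < f i x := by
  by_contra h
  push_neg at h
  have hz : ∀ i, f i x = 0 := fun i => le_antisymm (h i) (hf.2.1 i x).1
  have := hf.2.2 x
  simp only [hz] at this
  exact absurd (this.unique hasSum_zero) one_ne_zero

lemma forward_open (hD : IsDoldSpace X) (x : X) : IsOpen (pathComponent x) := by
  obtain ⟨ι, U, hcov, ⟨f, hpart, hlf, hsub⟩, hcontr⟩ := hD
  rw [isOpen_iff_forall_mem_open]
  intro y hy
  obtain ⟨i, hi⟩ := exists_pos_of_partition hpart y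
  obtain ⟨x₀, hx₀⟩ := hcontr i
  have hyU : y ∈ U i := hsub i (subset_closure (by simpa using hi.ne'))
  refine ⟨f i ⁻¹' Set.Ioi 0, ?_, (hpart.1 i).isOpen_preimage _ isOpen_Ioi, hi⟩
  intro z hz
  have hzU : z ∈ U i := hsub i (subset_closure (by simpa using (Set.mem_Ioi.1 hz).ne'))
  have h1 : Joined z x₀ := joined_of_ambient hx₀ hzU
  have h2 : Joined y x₀ := joined_of_ambient hx₀ hyU
  exact mem_pathComponent_of_mem ((h1.trans h2.symm).trans (Joined.symm hy))

lemma forward_dold (hD : IsDoldSpace X) (x : X) : IsDoldSpace (pathComponent x) := by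
  obtain ⟨ι, U, hcov, ⟨f, hpart, hlf, hsub⟩, hcontr⟩ := hD
  set P := pathComponent x with hP
  refine ⟨ULift.{u} ι, fun i => Subtype.val ⁻¹' U i.down, fun y => ?_, ?_, ?_⟩
  · obtain ⟨i, hi⟩ := hcov y.1; exact ⟨⟨i⟩, hi⟩
  · refine ⟨fun i y => f i.down y.1, ⟨fun i => (hpart.1 i.down).comp continuous_subtype_val,
      fun i y => hpart.2.1 i.down y.1, fun y => ?_⟩, ?_, ?_⟩
    · exact (Equiv.ulift.hasSum_iff).2 (hpart.2.2 y.1)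
    · intro y
      obtain ⟨N, hN, hfin⟩ := hlf y.1
      refine ⟨Subtype.val ⁻¹' N, continuous_subtype_val.continuousAt.preimage_mem_nhds hN, ?_⟩
      have : {i : ULift ι | (closure (Function.support fun y : P => f i.down y.1) ∩
          Subtype.val ⁻¹' N).Nonempty} ⊆
          (Equiv.ulift.symm '' {i | (closure (Function.support (f i)) ∩ N).Nonempty}) := by
        rintro i ⟨z, hz1, hz2⟩
        refine ⟨i.down, ⟨z.1, ?_, hz2⟩, rfl⟩
        have : Function.support (fun y : P => f i.down y.1) =
            Subtype.val ⁻¹' Function.support (f i.down) := rfl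
        rw [this] at hz1
        exact continuous_subtype_val.closure_preimage_subset _ hz1
      exact ((hfin.image _).subset this)
    · intro i
      have : Function.support (fun y : P => f i.down y.1) =
          Subtype.val ⁻¹' Function.support (f i.down) := rfl
      rw [this]
      intro z hz
      exact hsub i.down (continuous_subtype_val.closure_preimage_subset _ hz)
  · rintro ⟨i⟩
    simp only
    by_cases hne : (Subtype.val ⁻¹' U i : Set P).Nonempty
    · obtain ⟨u, hu⟩ := hne
      obtain ⟨x₀, ⟨H⟩⟩ := hcontr i
      have hx₀P : x₀ ∈ P := by
        have h1 : Joined (u : X) x₀ := joined_of_homotopy H hu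
        exact mem_pathComponent_of_mem (h1.symm.trans (Joined.symm u.2))
      have hUP : ∀ a ∈ U i, a ∈ P := by
        intro a ha
        have h1 : Joined a x₀ := joined_of_homotopy H ha
        exact mem_pathComponent_of_mem (h1.trans (Joined.symm (by exact hx₀P)))
      have hmem : ∀ (t : I) (a : ↥(U i)), H (t, a) ∈ P := by
        intro t a
        have hc : Joined (a : X) (H (t, a)) := by
          refine ⟨⟨⟨fun s => H (⟨s.1 * t.1, unitInterval.mul_mem s.2 t.2⟩, a), by fun_prop⟩,
            ?_, ?_⟩⟩
          · show H (⟨(0:I).1 * t.1, _⟩, a) = _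
            have h0 : (⟨(0:I).1 * t.1, unitInterval.mul_mem (0:I).2 t.2⟩ : I) = 0 :=
              Subtype.ext (by simp)
            rw [h0]; exact H.apply_zero a
          · show H (⟨(1:I).1 * t.1, _⟩, a) = _
            have h1 : (⟨(1:I).1 * t.1, unitInterval.mul_mem (1:I).2 t.2⟩ : I) = t :=
              Subtype.ext (by simp)
            rw [h1]
        exact Joined.trans (hUP a a.2) hc
      refine ⟨⟨x₀, hx₀P⟩, ⟨?_⟩⟩
      refine ⟨⟨fun p => ⟨H (p.1, ⟨p.2.1.1, p.2.2⟩), hmem _ _⟩, ?_⟩, ?_, ?_⟩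
      · exact (H.continuous.comp (by fun_prop)).subtype_mk _
      · exact fun y => Subtype.ext (H.apply_zero _)
      · exact fun y => Subtype.ext (H.apply_one _)
    · have he : IsEmpty ↥(Subtype.val ⁻¹' U i : Set P) := by
        rw [Set.not_nonempty_iff_eq_empty] at hne
        simp [hne]
      exact ⟨⟨x, mem_pathComponent_self x⟩, ambient_of_isEmpty _ _⟩

end Forward


/- ### Backward direction -/

section Backward
variable {X : Type u} [TopologicalSpace X]

lemma backward (h : ∀ x : X, IsOpen (pathComponent x) ∧ IsDoldSpace (pathComponent x)) :
    IsDoldSpace X := by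
  classical
  have hopen : ∀ x : X, IsOpen (pathComponent x) := fun x => (h x).1
  have hclosed : ∀ x : X, IsClosed (pathComponent x) := by
    intro x
    rw [← isOpen_compl_iff, isOpen_iff_forall_mem_open]
    intro y hy
    refine ⟨pathComponent y, ?_, hopen y, mem_pathComponent_self y⟩
    intro z hz hzx
    exact hy (((pathComponent_congr hz).symm.trans (pathComponent_congr hzx)) ▸
      mem_pathComponent_self y)
  -- path components indexed by the zeroth homotopy set
  let Z := ZerothHomotopy X
  let q : X → Z := @Quotient.mk'' X (pathSetoid X)
  let P : Z → Set X := fun c => pathComponent (c.out)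
  have hq : ∀ x : X, x ∈ P (q x) := fun x => Quotient.exact (Quotient.out_eq (q x))
  have key : ∀ (c : Z) (z : X), z ∈ P c → c = q z :=
    fun c z hz => (Quotient.out_eq c).symm.trans (Quotient.sound hz)
  have hPopen : ∀ c, IsOpen (P c) := fun c => hopen _
  have hPclosed : ∀ c, IsClosed (P c) := fun c => hclosed _
  choose ι V hcov hnum hcontr using fun c : Z => (h (Quotient.out c)).2
  choose g hgpart hglf hgsub using hnum
  refine ⟨(c : Z) × ι c, fun p => Subtype.val '' V p.1 p.2, ?_, ?_, ?_⟩
  · intro x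
    obtain ⟨i, hi⟩ := hcov (q x) ⟨x, hq x⟩
    exact ⟨⟨q x, i⟩, ⟨x, hq x⟩, hi, rfl⟩
  · set f : ((c : Z) × ι c) → X → ℝ :=
      fun p x => if hx : x ∈ P p.1 then g p.1 p.2 ⟨x, hx⟩ else 0 with hf
    have hfd : ∀ (p : (c : Z) × ι c) (x : X),
        f p x = if hx : x ∈ P p.1 then g p.1 p.2 ⟨x, hx⟩ else 0 := fun _ _ => rfl
    have hsupp : ∀ p, Function.support (f p) =
        Subtype.val '' Function.support (g p.1 p.2) := by
      intro p
      ext z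
      constructor
      · intro hz
        rw [Function.mem_support, hfd] at hz
        by_cases hzP : z ∈ P p.1
        · rw [dif_pos hzP] at hz
          exact ⟨⟨z, hzP⟩, hz, rfl⟩
        · rw [dif_neg hzP] at hz; exact absurd rfl hz
      · rintro ⟨a, ha, rfl⟩
        rw [Function.mem_support, hfd, dif_pos a.2]
        simpa using ha
    have hclo : ∀ p, closure (Function.support (f p)) =
        Subtype.val '' closure (Function.support (g p.1 p.2)) := by
      intro p
      rw [hsupp p]
      exact ((hPclosed p.1).isClosedEmbedding_subtypeVal.closure_image_eq _)
    refine ⟨f, ⟨?_, ?_, ?_⟩, ?_, ?_⟩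
    · -- continuity
      intro p
      rw [continuous_iff_continuousAt]
      intro z
      by_cases hz : z ∈ P p.1
      · have h1 : ContinuousOn (f p) (P p.1) := by
          rw [continuousOn_iff_continuous_restrict]
          have : Set.restrict (P p.1) (f p) = g p.1 p.2 := by
            funext y
            exact dif_pos y.2
          rw [show (P p.1).domRestrict (f p) = g p.1 p.2 from this]
          exact (hgpart p.1).1 p.2
        exact h1.continuousAt ((hPopen p.1).mem_nhds hz)
      · have h2 : ContinuousOn (f p) (P p.1)ᶜ := by
          refine ContinuousOn.congr (continuousOn_const (c := (0:ℝ))) ?_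
          intro y hy
          rw [hfd]
          exact dif_neg hy
        exact h2.continuousAt ((hPclosed p.1).isOpen_compl.mem_nhds hz)
    · -- range in Icc
      intro p z
      rw [hfd]
      by_cases hz : z ∈ P p.1
      · rw [dif_pos hz]; exact (hgpart p.1).2.1 p.2 _
      · rw [dif_neg hz]; exact ⟨le_refl 0, zero_le_one⟩
    · -- sum 1
      intro z
      have hzero : ∀ p : (c : Z) × ι c, p ∉ Set.range (Sigma.mk (q z)) → f p z = 0 := by
        rintro ⟨c, i⟩ hp
        rw [hfd]
        refine dif_neg fun hzc => hp ?_
        obtain rfl := key c z hzc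
        exact ⟨i, rfl⟩
      have hmain : HasSum (fun i : ι (q z) => f ⟨q z, i⟩ z) 1 := by
        have : (fun i : ι (q z) => f ⟨q z, i⟩ z) = fun i => g (q z) i ⟨z, hq z⟩ := by
          funext i
          rw [hfd, dif_pos (hq z)]
        rw [this]
        exact (hgpart (q z)).2.2 ⟨z, hq z⟩
      exact (sigma_mk_injective.hasSum_iff hzero).1 hmain
    · -- locally finite
      intro z
      obtain ⟨N, hN, hfin⟩ := hglf (q z) ⟨z, hq z⟩
      obtain ⟨N', hN', hN'sub⟩ := (mem_nhds_subtype _ _ _).1 hN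
      refine ⟨N' ∩ P (q z), Filter.inter_mem hN' ((hPopen _).mem_nhds (hq z)), ?_⟩
      have hsub2 : {p : (c : Z) × ι c |
          (closure (Function.support (f p)) ∩ (N' ∩ P (q z))).Nonempty} ⊆
          Sigma.mk (q z) '' {i | (closure (Function.support (g (q z) i)) ∩
            Subtype.val ⁻¹' N').Nonempty} := by
        rintro ⟨c, i⟩ ⟨w, hw1, hw2, hw3⟩
        rw [hclo] at hw1
        obtain ⟨a, ha, haw⟩ := hw1
        have hcq : c = q z := by
          rw [key c w (haw ▸ a.2)]
          exact (key (q z) w hw3).symm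
        subst hcq
        refine ⟨i, ⟨a, ha, ?_⟩, rfl⟩
        show (a : X) ∈ N'
        rw [haw]; exact hw2
      refine Set.Finite.subset (Set.Finite.image _ (Set.Finite.subset hfin ?_)) hsub2
      rintro i ⟨a, ha, ha'⟩
      exact ⟨a, ha, hN'sub ha'⟩
    · -- subordinate
      intro p
      rw [hclo]
      exact Set.image_mono (hgsub p.1 p.2)
  · -- contractibility
    rintro ⟨c, i⟩
    obtain ⟨y₀, ⟨H⟩⟩ := hcontr c i
    have hm1 : ∀ z : ↥(Subtype.val '' V c i), (z : X) ∈ P c := by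
      rintro ⟨z, a, ha, rfl⟩; exact a.2
    have hm2 : ∀ z : ↥(Subtype.val '' V c i), (⟨(z : X), hm1 z⟩ : ↥(P c)) ∈ V c i := by
      rintro ⟨z, a, ha, rfl⟩
      have : a = ⟨(a : X), hm1 ⟨a, a, ha, rfl⟩⟩ := Subtype.ext rfl
      exact this ▸ ha
    refine ⟨(y₀ : X), ⟨?_⟩⟩
    refine ⟨⟨fun p => (H (p.1, ⟨⟨(p.2 : X), hm1 p.2⟩, hm2 p.2⟩) : ↥(P c)).1, ?_⟩, ?_, ?_⟩
    · refine continuous_subtype_val.comp (H.continuous.comp ?_)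
      exact continuous_fst.prodMk
        (((continuous_subtype_val.comp continuous_snd).subtype_mk _).subtype_mk _)
    · exact fun z => congrArg Subtype.val (H.apply_zero _)
    · exact fun z => congrArg Subtype.val (H.apply_one _)

end Backward


/-- `X` is Dold iff every path component is open and is a Dold space. -/
theorem stmt4 (X : Type u) [TopologicalSpace X] :
    IsDoldSpace X ↔
      ∀ x : X, IsOpen (pathComponent x) ∧ IsDoldSpace (pathComponent x) := by
  constructor
  · exact fun hD x => ⟨forward_open hD x, forward_dold hD x⟩
  · exact backward
end

section
/- A disjoint union (topological sum) X = ⨿_{j∈J} X_j is a Dold space if and only if each summand X_j is a Dold space. -/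
open unitInterval

universe u v w

section Aux

open Function Set Topology

/-- Project an element of a sigma type known to lie in the fiber over `i`. -/
def sigmaProj {J : Type*} {X : J → Type*} (i : J) : ∀ s : Σ j, X j, s.1 = i → X i
  | ⟨_, x⟩, h => h ▸ x

@[simp] lemma sigmaMk_sigmaProj {J : Type*} {X : J → Type*} (i : J) (s : Σ j, X j)
    (h : s.1 = i) : (⟨i, sigmaProj i s h⟩ : Σ j, X j) = s := by
  cases s; cases h; rfl

lemma isDoldSpace_of_isEmpty (Y : Type u) [TopologicalSpace Y] [IsEmpty Y] :
    IsDoldSpace Y :=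
  ⟨Y, fun _ => ∅, fun x => isEmptyElim x,
    ⟨fun _ _ => 0, ⟨fun _ => continuous_const, fun _ x => isEmptyElim x,
      fun x => isEmptyElim x⟩,
      fun x => isEmptyElim x,
      fun _ => by
        have : Function.support (fun _ : Y => (0 : ℝ)) = ∅ := Function.support_zero
        rw [this, closure_empty]⟩,
    fun k => isEmptyElim k⟩

open Classical in
/-- The glued partition of unity on a sigma type. -/
noncomputable def sumPOU {J : Type*} {X : J → Type*} (κ : J → Type*)
    (f : ∀ i, κ i → X i → ℝ) (p : Σ i, κ i) (s : Σ i, X i) : ℝ :=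
  if hs : s.1 = p.1 then f p.1 p.2 (sigmaProj p.1 s hs) else 0

lemma sumPOU_mk_self {J : Type*} {X : J → Type*} (κ : J → Type*)
    (f : ∀ i, κ i → X i → ℝ) (i : J) (k : κ i) (x : X i) :
    sumPOU (X := X) κ f ⟨i, k⟩ ⟨i, x⟩ = f i k x :=
  dif_pos rfl

lemma sumPOU_ne {J : Type*} {X : J → Type*} (κ : J → Type*)
    (f : ∀ i, κ i → X i → ℝ) {p : Σ i, κ i} {s : Σ i, X i} (h : ¬ s.1 = p.1) :
    sumPOU (X := X) κ f p s = 0 :=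
  dif_neg h

lemma support_sumPOU {J : Type*} {X : J → Type*} (κ : J → Type*)
    (f : ∀ i, κ i → X i → ℝ) (i : J) (k : κ i) :
    Function.support (sumPOU (X := X) κ f ⟨i, k⟩) =
      Sigma.mk i '' Function.support (f i k) := by
  ext s
  constructor
  · intro hs
    by_cases hfst : s.1 = i
    · refine ⟨sigmaProj i s hfst, ?_, sigmaMk_sigmaProj i s hfst⟩
      intro h0
      apply hs
      rw [show sumPOU (X := X) κ f ⟨i, k⟩ s = f i k (sigmaProj i s hfst) from dif_pos hfst, h0]
    · exact absurd (sumPOU_ne κ f hfst) hs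
  · rintro ⟨x, hx, rfl⟩
    simpa [sumPOU_mk_self] using hx

end Aux

open Function Set Topology

/-- a disjoint union is Dold iff each summand is Dold. -/
theorem stmt6 {ι : Type u} (X : ι → Type u) [∀ i, TopologicalSpace (X i)] :
    IsDoldSpace (Σ i, X i) ↔ ∀ i, IsDoldSpace (X i) := by
  constructor
  · rintro ⟨κ, U, hcov, ⟨f, ⟨hc, h01, hsum⟩, hlf, hsub⟩, hcontr⟩ i
    by_cases hne : Nonempty (X i)
    · have key : ∀ k, closure (Function.support fun x : X i => f k ⟨i, x⟩) =
          Sigma.mk i ⁻¹' closure (Function.support (f k)) := by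
        intro k
        rw [isOpenMap_sigmaMk.preimage_closure_eq_closure_preimage continuous_sigmaMk]
        rfl
      refine ⟨κ, fun k => Sigma.mk i ⁻¹' U k, fun x => hcov ⟨i, x⟩,
        ⟨fun k x => f k ⟨i, x⟩, ⟨fun k => (hc k).comp continuous_sigmaMk,
          fun k x => h01 k ⟨i, x⟩, fun x => hsum ⟨i, x⟩⟩, ?_, fun k => by
            rw [key]; exact fun y hy => hsub k hy⟩, ?_⟩
      · intro x
        obtain ⟨N, hN, hfin⟩ := hlf ⟨i, x⟩
        refine ⟨Sigma.mk i ⁻¹' N, continuous_sigmaMk.continuousAt.preimage_mem_nhds hN,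
          hfin.subset ?_⟩
        rintro k ⟨y, hy1, hy2⟩
        have hy1' : y ∈ closure (Function.support fun x : X i => f k ⟨i, x⟩) := hy1
        rw [key] at hy1'
        exact ⟨⟨i, y⟩, hy1', hy2⟩
      · intro k
        obtain ⟨x₀, ⟨H⟩⟩ := hcontr k
        by_cases hVk : ∃ v : X i, v ∈ Sigma.mk i ⁻¹' U k
        · obtain ⟨v₀, hv₀⟩ := hVk
          let φ : ↥(Sigma.mk i ⁻¹' U k) → ↥(U k) := fun v => ⟨⟨i, v.1⟩, v.2⟩
          have φcont : Continuous φ :=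
            (continuous_sigmaMk.comp continuous_subtype_val).subtype_mk _
          have hG1 : ∀ (t : I) (v : ↥(Sigma.mk i ⁻¹' U k)),
              (H (t, φ v)).1 = i := by
            intro t v
            have hpath : Continuous fun t : I => H (t, φ v) :=
              H.continuous.comp (continuous_id.prodMk continuous_const)
            have h0 : H (0, φ v) = (⟨i, v.1⟩ : Σ j, X j) := H.apply_zero (φ v)
            have huniv : {t : I | H (t, φ v) ∈ Set.range (Sigma.mk i)} = Set.univ := by
              apply IsClopen.eq_univ
              · exact ⟨isClosed_range_sigmaMk.preimage hpath,
                  isOpen_range_sigmaMk.preimage hpath⟩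
              · exact ⟨0, by rw [Set.mem_setOf_eq, h0]; exact ⟨v.1, rfl⟩⟩
            obtain ⟨y, hy⟩ := Set.eq_univ_iff_forall.mp huniv t
            rw [← hy]
          have hGcont : Continuous fun p : I × ↥(Sigma.mk i ⁻¹' U k) =>
              H (p.1, φ p.2) :=
            H.continuous.comp (continuous_fst.prodMk (φcont.comp continuous_snd))
          have hG'cont : Continuous fun p : I × ↥(Sigma.mk i ⁻¹' U k) =>
              sigmaProj i (H (p.1, φ p.2)) (hG1 p.1 p.2) := by
            rw [IsEmbedding.sigmaMk.continuous_iff]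
            convert hGcont using 1
            funext p
            exact sigmaMk_sigmaProj i _ (hG1 p.1 p.2)
          have h1 : H (1, φ ⟨v₀, hv₀⟩) = x₀ := H.apply_one _
          have hx₀ : x₀.1 = i := h1 ▸ hG1 1 ⟨v₀, hv₀⟩
          refine ⟨sigmaProj i x₀ hx₀, ⟨⟨⟨fun p => sigmaProj i (H (p.1, φ p.2))
            (hG1 p.1 p.2), hG'cont⟩, ?_, ?_⟩⟩⟩
          · intro v
            apply sigma_mk_injective (i := i)
            show (⟨i, sigmaProj i (H (0, φ v)) (hG1 0 v)⟩ : Σ j, X j) = ⟨i, v.1⟩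
            rw [sigmaMk_sigmaProj]
            exact H.apply_zero (φ v)
          · intro v
            apply sigma_mk_injective (i := i)
            show (⟨i, sigmaProj i (H (1, φ v)) (hG1 1 v)⟩ : Σ j, X j) =
              ⟨i, sigmaProj i x₀ hx₀⟩
            rw [sigmaMk_sigmaProj, sigmaMk_sigmaProj]
            exact H.apply_one (φ v)
        · push_neg at hVk
          haveI : IsEmpty ↥(Sigma.mk i ⁻¹' U k : Set (X i)) := ⟨fun v => hVk v.1 v.2⟩
          obtain ⟨y₀⟩ := hne
          refine ⟨y₀, ?_⟩
          have heq : (⟨Subtype.val, continuous_subtype_val⟩ :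
              C(↥(Sigma.mk i ⁻¹' U k : Set (X i)), X i)) =
              ContinuousMap.const _ y₀ := ContinuousMap.ext fun v => isEmptyElim v
          show AmbientlyContractibleTo (Sigma.mk i ⁻¹' U k) y₀
          unfold AmbientlyContractibleTo
          rw [heq]
    · haveI := not_nonempty_iff.mp hne
      exact isDoldSpace_of_isEmpty (X i)
  · intro h
    classical
    choose κ U hall using h
    choose f hPOU hlf hsub using fun i => (hall i).2.1
    obtain hcf : ∀ i, (∀ k, Continuous (f i k)) := fun i => (hPOU i).1
    obtain h01 : ∀ i, ∀ k x, f i k x ∈ Set.Icc (0:ℝ) 1 := fun i => (hPOU i).2.1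
    obtain hsum : ∀ i, ∀ x, HasSum (fun k => f i k x) 1 := fun i => (hPOU i).2.2
    have hclos : ∀ (i : ι) (k : κ i),
        closure (Function.support (sumPOU (X := X) κ f ⟨i, k⟩)) =
          Sigma.mk i '' closure (Function.support (f i k)) := by
      intro i k
      rw [support_sumPOU, IsClosedEmbedding.sigmaMk.closure_image_eq]
    refine ⟨Σ i, κ i, fun p => Sigma.mk p.1 '' U p.1 p.2, ?_, ?_, ?_⟩
    · rintro ⟨j, x⟩
      obtain ⟨k, hk⟩ := (hall j).1 x
      exact ⟨⟨j, k⟩, x, hk, rfl⟩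
    · refine ⟨sumPOU (X := X) κ f, ⟨?_, ?_, ?_⟩, ?_, ?_⟩
      · rintro ⟨i, k⟩
        apply continuous_sigma
        intro j
        by_cases hj : j = i
        · subst hj
          have : (fun x => sumPOU (X := X) κ f ⟨j, k⟩ ⟨j, x⟩) = f j k :=
            funext fun x => sumPOU_mk_self κ f j k x
          show Continuous fun x : X j => sumPOU (X := X) κ f ⟨j, k⟩ ⟨j, x⟩
          rw [this]
          exact hcf j k
        · have : (fun x : X j => sumPOU (X := X) κ f ⟨i, k⟩ ⟨j, x⟩) = fun _ => (0:ℝ) :=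
            funext fun x => sumPOU_ne κ f hj
          show Continuous fun x : X j => sumPOU (X := X) κ f ⟨i, k⟩ ⟨j, x⟩
          rw [this]
          exact continuous_const
      · rintro ⟨i, k⟩ ⟨j, x⟩
        by_cases hj : j = i
        · subst hj
          rw [sumPOU_mk_self]
          exact h01 j k x
        · rw [sumPOU_ne κ f hj]
          exact ⟨le_refl _, zero_le_one⟩
      · rintro ⟨j, x⟩
        have hinj : Function.Injective (fun k : κ j => (⟨j, k⟩ : Σ i, κ i)) :=
          sigma_mk_injective
        refine (hinj.hasSum_iff ?_).mp ?_
        · rintro ⟨i, k⟩ hp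
          refine sumPOU_ne κ f ?_
          intro hji
          have hji' : j = i := hji
          subst hji'
          exact hp ⟨k, rfl⟩
        · have : ((fun p : Σ i, κ i => sumPOU (X := X) κ f p ⟨j, x⟩) ∘
              fun k : κ j => (⟨j, k⟩ : Σ i, κ i)) = fun k => f j k x :=
            funext fun k => sumPOU_mk_self κ f j k x
          rw [this]
          exact hsum j x
      · rintro ⟨j, x⟩
        obtain ⟨N, hN, hfin⟩ := hlf j x
        refine ⟨Sigma.mk j '' N, ?_, ?_⟩
        · rw [← IsOpenEmbedding.sigmaMk.map_nhds_eq]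
          exact Filter.image_mem_map hN
        · refine (hfin.image (fun k : κ j => (⟨j, k⟩ : Σ i, κ i))).subset ?_
          rintro ⟨i, k⟩ ⟨s, hs1, hs2⟩
          replace hs1 : s ∈ closure (Function.support (sumPOU (X := X) κ f ⟨i, k⟩)) := hs1
          rw [hclos] at hs1
          obtain ⟨y, hy, rfl⟩ := hs1
          obtain ⟨z, hz, hzy⟩ := hs2
          have hji : j = i := congrArg Sigma.fst hzy
          subst hji
          have hzyy : z = y := sigma_mk_injective hzy
          subst hzyy
          exact ⟨k, ⟨z, hy, hz⟩, rfl⟩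
      · rintro ⟨i, k⟩
        show closure (Function.support (sumPOU (X := X) κ f ⟨i, k⟩)) ⊆ _
        rw [hclos]
        exact Set.image_mono (hsub i k)
    · rintro ⟨i, k⟩
      obtain ⟨x₀, ⟨H⟩⟩ := (hall i).2.2 k
      refine ⟨⟨i, x₀⟩, ?_⟩
      have hfst : ∀ s : ↥(Sigma.mk i '' U i k), s.1.1 = i := by
        rintro ⟨s, x, hx, rfl⟩; rfl
      have hmem : ∀ s : ↥(Sigma.mk i '' U i k), sigmaProj i s.1 (hfst s) ∈ U i k := by
        rintro ⟨s, x, hx, rfl⟩; exact hx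
      let e : ↥(Sigma.mk i '' U i k) → ↥(U i k) := fun s =>
        ⟨sigmaProj i s.1 (hfst s), hmem s⟩
      have he : ∀ s, (⟨i, ((e s) : X i)⟩ : Σ j, X j) = s.1 := fun s =>
        sigmaMk_sigmaProj i _ (hfst s)
      have hecont : Continuous e := by
        apply Continuous.subtype_mk
        rw [IsEmbedding.sigmaMk.continuous_iff]
        convert continuous_subtype_val using 1
        funext s
        exact he s
      refine ⟨⟨⟨fun p => ⟨i, H (p.1, e p.2)⟩, ?_⟩, ?_, ?_⟩⟩
      · exact continuous_sigmaMk.comp (H.continuous.comp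
          (continuous_fst.prodMk (hecont.comp continuous_snd)))
      · intro s
        show (⟨i, H (0, e s)⟩ : Σ j, X j) = s.1
        rw [H.apply_zero]
        exact he s
      · intro s
        show (⟨i, H (1, e s)⟩ : Σ j, X j) = ⟨i, x₀⟩
        rw [H.apply_one]
        rfl
end

section
/- If a topological space Y is dominated by a Dold space X (i.e. there are continuous maps f : X → Y and g : Y → X with f ∘ g homotopic to the identity of Y), then Y is itself a Dold space. -/
open unitInterval

universe u v w

/-- a space dominated by a Dold space is Dold. -/
theorem stmt7 {X : Type u} {Y : Type v} [TopologicalSpace X] [TopologicalSpace Y]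
    (f : C(X, Y)) (g : C(Y, X))
    (h : (f.comp g).Homotopic (ContinuousMap.id Y))
    (hX : IsDoldSpace X) :
    IsDoldSpace Y := by
  classical
  obtain ⟨ι, U, hcov, ⟨p, ⟨hpc, hp01, hpsum⟩, hplf, hpsub⟩, hcontr⟩ := hX
  rcases isEmpty_or_nonempty Y with hY | hY
  · exact ⟨PEmpty.{v+1}, fun _ => ∅, fun y => (IsEmpty.false y).elim,
      ⟨fun _ _ => 0,
        ⟨fun _ => continuous_const, fun _ _ => ⟨le_refl 0, zero_le_one⟩,
          fun y => (IsEmpty.false y).elim⟩,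
        fun y => (IsEmpty.false y).elim,
        fun i y hy => (IsEmpty.false y).elim⟩,
      fun i => i.elim⟩
  obtain ⟨y₀⟩ := hY
  set q : ι → Y → ℝ := fun i y => p i (g y) with hqdef
  set e : ι → Set Y := fun i => g ⁻¹' (U i) with hedef
  have hqsupp : ∀ i, closure (Function.support (q i)) ⊆
      g ⁻¹' (closure (Function.support (p i))) := by
    intro i
    apply closure_minimal
    · intro y hy
      exact subset_closure hy
    · exact isClosed_closure.preimage g.continuous
  have hqlf : LocallyFinite (fun i => closure (Function.support (q i))) :=
    (hplf.preimage_continuous g.continuous).subset hqsupp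
  have hqsub : ∀ i, closure (Function.support (q i)) ⊆ e i :=
    fun i => (hqsupp i).trans (Set.preimage_mono (hpsub i))
  have hqsum : ∀ y, HasSum (fun i => q i y) 1 := fun y => hpsum (g y)
  set r : Set Y → Y → ℝ := fun S y => ∑' i : e ⁻¹' {S}, q i y with hrdef
  have hrsum : ∀ y, HasSum (fun S => r S y) 1 := fun y => (hqsum y).tsum_fiberwise e
  have hrsupp : ∀ S, Function.support (r S) ⊆
      ⋃ i : ↥(e ⁻¹' {S}), Function.support (q (i : ι)) := by
    intro S y hy
    by_contra hc
    apply hy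
    have hz : ∀ i : ↥(e ⁻¹' {S}), q (i : ι) y = 0 := by
      intro i
      by_contra h0
      exact hc (Set.mem_iUnion.2 ⟨i, h0⟩)
    have : (fun i : ↥(e ⁻¹' {S}) => q (i : ι) y) = fun _ => 0 := funext hz
    show (∑' i : ↥(e ⁻¹' {S}), q (i : ι) y) = 0
    rw [this, tsum_zero]
  have hrcl : ∀ S, closure (Function.support (r S)) ⊆
      ⋃ i : ↥(e ⁻¹' {S}), closure (Function.support (q (i : ι))) := by
    intro S
    have hlf : LocallyFinite (fun i : ↥(e ⁻¹' {S}) => closure (Function.support (q (i : ι)))) :=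
      hqlf.comp_injective Subtype.coe_injective
    refine closure_minimal ?_ (hlf.isClosed_iUnion fun _ => isClosed_closure)
    exact (hrsupp S).trans (Set.iUnion_mono fun i => subset_closure)
  have hrlf : LocallyFinite (fun S => closure (Function.support (r S))) := by
    intro y
    obtain ⟨N, hN, hNfin⟩ := hqlf y
    refine ⟨N, hN, (hNfin.image e).subset ?_⟩
    rintro S ⟨z, hz1, hz2⟩
    obtain ⟨i, hzi⟩ := Set.mem_iUnion.1 (hrcl S hz1)
    exact ⟨(i : ι), ⟨z, hzi, hz2⟩, i.2⟩
  have hrc : ∀ S, Continuous (r S) := by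
    intro S
    rw [continuous_iff_continuousAt]
    intro y
    obtain ⟨N, hN, hNfin⟩ := hqlf y
    set F : Finset ι := hNfin.toFinset with hFdef
    set s : Finset ↥(e ⁻¹' {S}) := F.subtype (· ∈ e ⁻¹' {S}) with hsdef
    have key : ∀ z ∈ N, r S z = ∑ i ∈ s, q (i : ι) z := by
      intro z hz
      refine tsum_eq_sum ?_
      intro b hb
      by_contra h0
      apply hb
      rw [hsdef, Finset.mem_subtype]
      have hbF : (b : ι) ∈ F := by
        rw [hFdef, Set.Finite.mem_toFinset]
        exact ⟨z, subset_closure h0, hz⟩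
      simpa [b.2] using hbF
    have hcont : ContinuousAt (fun z => ∑ i ∈ s, q (i : ι) z) y :=
      (continuous_finset_sum s fun i _ => (hpc (i : ι)).comp g.continuous).continuousAt
    refine hcont.congr ?_
    filter_upwards [hN] with z hz
    exact (key z hz).symm
  have hr01 : ∀ S y, r S y ∈ Set.Icc (0 : ℝ) 1 := by
    intro S y
    refine ⟨tsum_nonneg fun i => (hp01 (i : ι) (g y)).1, ?_⟩
    exact le_hasSum (hrsum y) S fun S' _ => tsum_nonneg fun i => (hp01 (i : ι) (g y)).1
  set W : Set Y → Set Y := fun S => if ∃ i, e i = S then S else ∅ with hWdef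
  refine ⟨Set Y, W, ?_, ⟨r, ⟨hrc, hr01, hrsum⟩, hrlf, ?_⟩, ?_⟩
  · intro y
    obtain ⟨i, hi⟩ := hcov (g y)
    refine ⟨e i, ?_⟩
    show y ∈ if ∃ i', e i' = e i then e i else ∅
    rw [if_pos ⟨i, rfl⟩]
    exact hi
  · intro S
    show closure (Function.support (r S)) ⊆ if ∃ i, e i = S then S else ∅
    by_cases hS : ∃ i, e i = S
    · rw [if_pos hS]
      refine (hrcl S).trans (Set.iUnion_subset fun i => ?_)
      have hsub := hqsub (i : ι)
      rw [Set.mem_singleton_iff.1 i.2] at hsub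
      exact hsub
    · rw [if_neg hS]
      have hemp : IsEmpty ↥(e ⁻¹' {S}) :=
        ⟨fun i => hS ⟨(i : ι), Set.mem_singleton_iff.1 i.2⟩⟩
      have hr0 : r S = fun _ => 0 := funext fun y => tsum_empty
      rw [hr0]
      simp
  · intro S
    show AmbientlyContractible (if ∃ i, e i = S then S else ∅)
    by_cases hS : ∃ i, e i = S
    · obtain ⟨i, rfl⟩ := hS
      rw [if_pos ⟨i, rfl⟩]
      obtain ⟨x₀, hx₀⟩ := hcontr i
      refine ⟨f x₀, ?_⟩
      set V : Set Y := g ⁻¹' (U i) with hVdef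
      set inclV : C(↥V, Y) := ⟨Subtype.val, continuous_subtype_val⟩ with hinclV
      set inclU : C(↥(U i), X) := ⟨Subtype.val, continuous_subtype_val⟩ with hinclU
      set g' : C(↥V, ↥(U i)) :=
        ⟨fun v => ⟨g v, v.2⟩, (g.continuous.comp continuous_subtype_val).subtype_mk _⟩
        with hg'
      have step1 : ((f.comp g).comp inclV).Homotopic ((ContinuousMap.id Y).comp inclV) :=
        ContinuousMap.Homotopic.comp h (ContinuousMap.Homotopic.refl inclV)
      have e1 : (ContinuousMap.id Y).comp inclV = inclV := ContinuousMap.id_comp _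
      have e2 : (f.comp g).comp inclV = f.comp (inclU.comp g') :=
        ContinuousMap.ext fun _ => rfl
      have step2 : (inclU.comp g').Homotopic ((ContinuousMap.const (↥(U i)) x₀).comp g') :=
        ContinuousMap.Homotopic.comp hx₀ (ContinuousMap.Homotopic.refl g')
      have step3 : (f.comp (inclU.comp g')).Homotopic
          (f.comp ((ContinuousMap.const (↥(U i)) x₀).comp g')) :=
        ContinuousMap.Homotopic.comp (ContinuousMap.Homotopic.refl f) step2
      have e3 : f.comp ((ContinuousMap.const (↥(U i)) x₀).comp g') =
          ContinuousMap.const ↥V (f x₀) := ContinuousMap.ext fun _ => rfl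
      have A : inclV.Homotopic (f.comp (inclU.comp g')) := by
        rw [← e2]
        exact (e1 ▸ step1).symm
      exact A.trans (e3 ▸ step3)
    · rw [if_neg hS]
      refine ⟨y₀, ?_⟩
      show ContinuousMap.Homotopic _ _
      have : (⟨Subtype.val, continuous_subtype_val⟩ : C(↥(∅ : Set Y), Y)) =
          ContinuousMap.const ↥(∅ : Set Y) y₀ :=
        ContinuousMap.ext fun z => absurd z.2 (Set.notMem_empty _)
      rw [this]
end

section
/- Given continuous maps f : A → X and g : A → Y with X and Y Dold spaces, the double mapping cylinder M̂(f,g) = (X ⊔ A × [0,1] ⊔ Y)/∼, where (a,0) ∼ f(a) and (a,1) ∼ g(a), is a Dold space. -/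
open unitInterval

universe u v w

/-- The generating relation of the double mapping cylinder of `f : A → X` and `g : A → Y`:
`(a,0) ∼ f a` and `(a,1) ∼ g a`. -/
inductive DoubleMappingCylinderRel {A X Y : Type*} (f : A → X) (g : A → Y) :
    (X ⊕ (A × unitInterval) ⊕ Y) → (X ⊕ (A × unitInterval) ⊕ Y) → Prop
  | zero (a : A) : DoubleMappingCylinderRel f g (Sum.inr (Sum.inl (a, 0))) (Sum.inl (f a))
  | one (a : A) : DoubleMappingCylinderRel f g (Sum.inr (Sum.inl (a, 1))) (Sum.inr (Sum.inr (g a)))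

/-- The double mapping cylinder `(X ⊔ A × [0,1] ⊔ Y)/∼` with `(a,0) ∼ f a`, `(a,1) ∼ g a`. -/
def DoubleMappingCylinder {A X Y : Type*} (f : A → X) (g : A → Y) :=
  Quot (DoubleMappingCylinderRel f g)

instance {A X Y : Type*} [TopologicalSpace A] [TopologicalSpace X] [TopologicalSpace Y]
    (f : A → X) (g : A → Y) : TopologicalSpace (DoubleMappingCylinder f g) :=
  instTopologicalSpaceQuot

set_option linter.unusedSectionVars false
set_option linter.unusedVariables false

namespace Stmt9Aux

variable {A X Y : Type u} [TopologicalSpace A] [TopologicalSpace X] [TopologicalSpace Y]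
  (f : A → X) (g : A → Y)

abbrev mkQ : (X ⊕ (A × unitInterval) ⊕ Y) → DoubleMappingCylinder f g :=
  Quot.mk (DoubleMappingCylinderRel f g)

def Sat (S : Set (X ⊕ (A × unitInterval) ⊕ Y)) : Prop :=
  ∀ z w, DoubleMappingCylinderRel f g z w → (z ∈ S ↔ w ∈ S)

variable {f g}

theorem Sat.iff_of_eqvGen {S} (hS : Sat f g S) {z w}
    (h : Relation.EqvGen (DoubleMappingCylinderRel f g) z w) : z ∈ S ↔ w ∈ S := by
  induction h with
  | rel a b hab => exact hS a b hab
  | refl => exact Iff.rfl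
  | symm a b _ ih => exact ih.symm
  | trans a b c _ _ ih1 ih2 => exact ih1.trans ih2

theorem Sat.iff_of_eq {S} (hS : Sat f g S) {z w} (h : mkQ f g z = mkQ f g w) :
    z ∈ S ↔ w ∈ S :=
  hS.iff_of_eqvGen (Quot.eq.1 h)

theorem Sat.mem_image {S} (hS : Sat f g S) {z} : mkQ f g z ∈ mkQ f g '' S ↔ z ∈ S :=
  ⟨fun ⟨w, hw, hq⟩ => (hS.iff_of_eq hq).1 hw, fun h => ⟨z, h, rfl⟩⟩

theorem Sat.preimage_image {S} (hS : Sat f g S) : mkQ f g ⁻¹' (mkQ f g '' S) = S :=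
  Set.ext fun _ => hS.mem_image

theorem Sat.isOpen_image {S} (hS : Sat f g S) (hO : IsOpen S) :
    IsOpen (mkQ f g '' S) := by
  have h2 : IsOpen (mkQ f g ⁻¹' (mkQ f g '' S)) := by rw [hS.preimage_image]; exact hO
  exact isQuotientMap_quot_mk.isOpen_preimage.mp h2

theorem Sat.isClosed_image {S} (hS : Sat f g S) (hO : IsClosed S) :
    IsClosed (mkQ f g '' S) := by
  have h2 : IsClosed (mkQ f g ⁻¹' (mkQ f g '' S)) := by rw [hS.preimage_image]; exact hO
  exact isQuotientMap_quot_mk.isClosed_preimage.mp h2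


/-! ### tri sets -/

variable (f g) in
def tri (U : Set X) (P : Set (A × unitInterval)) (V : Set Y) :
    Set (X ⊕ (A × unitInterval) ⊕ Y) :=
  Sum.elim (· ∈ U) (Sum.elim (· ∈ P) (· ∈ V))

theorem mem_tri_inl {U : Set X} {P : Set (A × unitInterval)} {V : Set Y} {x : X} :
    Sum.inl x ∈ tri (A := A) U P V ↔ x ∈ U := Iff.rfl

theorem mem_tri_mid {U : Set X} {P : Set (A × unitInterval)} {V : Set Y} {p : A × unitInterval} :
    Sum.inr (Sum.inl p) ∈ tri (A := A) U P V ↔ p ∈ P := Iff.rfl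

theorem mem_tri_inr {U : Set X} {P : Set (A × unitInterval)} {V : Set Y} {y : Y} :
    Sum.inr (Sum.inr y) ∈ tri (A := A) U P V ↔ y ∈ V := Iff.rfl

theorem isOpen_tri {U : Set X} {P : Set (A × unitInterval)} {V : Set Y}
    (hU : IsOpen U) (hP : IsOpen P) (hV : IsOpen V) : IsOpen (tri (A := A) U P V) :=
  isOpen_sum_iff.2 ⟨hU, isOpen_sum_iff.2 ⟨hP, hV⟩⟩

theorem isClosed_tri {U : Set X} {P : Set (A × unitInterval)} {V : Set Y}
    (hU : IsClosed U) (hP : IsClosed P) (hV : IsClosed V) : IsClosed (tri (A := A) U P V) :=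
  isClosed_sum_iff.2 ⟨hU, isClosed_sum_iff.2 ⟨hP, hV⟩⟩

theorem tri_mono {U U' : Set X} {P P' : Set (A × unitInterval)} {V V' : Set Y}
    (hU : U ⊆ U') (hP : P ⊆ P') (hV : V ⊆ V') : tri (A := A) U P V ⊆ tri U' P' V' := by
  rintro (x | p | y) h
  · exact hU h
  · exact hP h
  · exact hV h

theorem sat_tri {U : Set X} {P : Set (A × unitInterval)} {V : Set Y}
    (h0 : ∀ a : A, ((a, (0 : unitInterval)) ∈ P ↔ f a ∈ U))
    (h1 : ∀ a : A, ((a, (1 : unitInterval)) ∈ P ↔ g a ∈ V)) :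
    Sat f g (tri U P V) := by
  rintro z w h
  cases h with
  | zero a => exact h0 a
  | one a => exact h1 a

/-! ### bump functions on the interval -/

def bX (t : unitInterval) : ℝ := min 1 (max 0 (2 - 3 * (t : ℝ)))

def bY (t : unitInterval) : ℝ := min 1 (max 0 (3 * (t : ℝ) - 1))

theorem bX_continuous : Continuous bX :=
  continuous_const.min (continuous_const.max
    (continuous_const.sub (continuous_const.mul continuous_subtype_val)))

theorem bY_continuous : Continuous bY :=
  continuous_const.min (continuous_const.max
    ((continuous_const.mul continuous_subtype_val).sub continuous_const))

theorem bX_mem (t : unitInterval) : bX t ∈ Set.Icc (0 : ℝ) 1 :=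
  ⟨le_min zero_le_one (le_max_left _ _), min_le_left _ _⟩

theorem bY_mem (t : unitInterval) : bY t ∈ Set.Icc (0 : ℝ) 1 :=
  ⟨le_min zero_le_one (le_max_left _ _), min_le_left _ _⟩

theorem bX_zero : bX 0 = 1 := by
  simp only [bX, Set.Icc.coe_zero]; norm_num

theorem bX_one : bX 1 = 0 := by
  simp only [bX, Set.Icc.coe_one]; norm_num

theorem bY_zero : bY 0 = 0 := by
  simp only [bY, Set.Icc.coe_zero]; norm_num

theorem bY_one : bY 1 = 1 := by
  simp only [bY, Set.Icc.coe_one]; norm_num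

theorem bXY_add (t : unitInterval) : bX t + bY t = 1 := by
  obtain ⟨u, h0, h1⟩ := t
  simp only [bX, bY]
  rcases le_total u (1 / 3 : ℝ) with h | h
  · rw [show max 0 (3 * u - 1) = 0 from max_eq_left (by linarith),
      show max 0 (2 - 3 * u) = 2 - 3 * u from max_eq_right (by linarith),
      show min 1 (2 - 3 * u) = 1 from min_eq_left (by linarith),
      show min (1 : ℝ) 0 = 0 from min_eq_right zero_le_one]
    ring
  · rcases le_total u (2 / 3 : ℝ) with h' | h'
    · rw [max_eq_right (by linarith : (0:ℝ) ≤ 2 - 3 * u),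
        max_eq_right (by linarith : (0:ℝ) ≤ 3 * u - 1),
        min_eq_right (by linarith : 2 - 3 * u ≤ 1),
        min_eq_right (by linarith : 3 * u - 1 ≤ 1)]
      ring
    · rw [show max 0 (2 - 3 * u) = 0 from max_eq_left (by linarith),
        show max 0 (3 * u - 1) = 3 * u - 1 from max_eq_right (by linarith),
        show min (1 : ℝ) 0 = 0 from min_eq_right zero_le_one,
        show min 1 (3 * u - 1) = 1 from min_eq_left (by linarith)]
      ring

theorem bX_ne_zero {t : unitInterval} (h : bX t ≠ 0) : (t : ℝ) ≤ 2 / 3 := by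
  by_contra h'
  push_neg at h'
  apply h
  rw [bX, show max 0 (2 - 3 * (t : ℝ)) = 0 from max_eq_left (by linarith)]
  exact min_eq_right zero_le_one

theorem bY_ne_zero {t : unitInterval} (h : bY t ≠ 0) : (1 : ℝ) / 3 ≤ (t : ℝ) := by
  by_contra h'
  push_neg at h'
  apply h
  rw [bY, show max 0 (3 * (t : ℝ) - 1) = 0 from max_eq_left (by linarith)]
  exact min_eq_right zero_le_one


/-! ### squeeze reparametrizations of the interval -/

def sqX (s t : unitInterval) : unitInterval :=
  ⟨(1 - (s : ℝ)) * (t : ℝ) + (s : ℝ) * max 0 (4 * (t : ℝ) - 3), by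
    have hs0 := s.2.1; have hs1 := s.2.2; have ht0 := t.2.1; have ht1 := t.2.2
    have hm0 : (0 : ℝ) ≤ max 0 (4 * (t : ℝ) - 3) := le_max_left _ _
    have hm1 : max 0 (4 * (t : ℝ) - 3) ≤ (t : ℝ) := max_le ht0 (by linarith)
    constructor
    · have := mul_nonneg (by linarith : (0:ℝ) ≤ 1 - (s:ℝ)) ht0
      have := mul_nonneg hs0 hm0
      linarith
    · nlinarith⟩

def sqY (s t : unitInterval) : unitInterval :=
  ⟨(1 - (s : ℝ)) * (t : ℝ) + (s : ℝ) * min 1 (4 * (t : ℝ)), by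
    have hs0 := s.2.1; have hs1 := s.2.2; have ht0 := t.2.1; have ht1 := t.2.2
    have hm0 : (0 : ℝ) ≤ min 1 (4 * (t : ℝ)) := le_min zero_le_one (by linarith)
    have hm1 : min 1 (4 * (t : ℝ)) ≤ 1 := min_le_left _ _
    constructor
    · have := mul_nonneg (by linarith : (0:ℝ) ≤ 1 - (s:ℝ)) ht0
      have := mul_nonneg hs0 hm0
      linarith
    · nlinarith⟩

theorem continuous_sqX : Continuous fun p : unitInterval × unitInterval => sqX p.1 p.2 := by
  apply Continuous.subtype_mk
  have h1 : Continuous fun p : unitInterval × unitInterval => (p.1 : ℝ) :=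
    continuous_subtype_val.comp continuous_fst
  have h2 : Continuous fun p : unitInterval × unitInterval => (p.2 : ℝ) :=
    continuous_subtype_val.comp continuous_snd
  exact ((continuous_const.sub h1).mul h2).add
    (h1.mul (continuous_const.max ((continuous_const.mul h2).sub continuous_const)))

theorem continuous_sqY : Continuous fun p : unitInterval × unitInterval => sqY p.1 p.2 := by
  apply Continuous.subtype_mk
  have h1 : Continuous fun p : unitInterval × unitInterval => (p.1 : ℝ) :=
    continuous_subtype_val.comp continuous_fst
  have h2 : Continuous fun p : unitInterval × unitInterval => (p.2 : ℝ) :=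
    continuous_subtype_val.comp continuous_snd
  exact ((continuous_const.sub h1).mul h2).add
    (h1.mul (continuous_const.min (continuous_const.mul h2)))

theorem sqX_zero_right (s : unitInterval) : sqX s 0 = 0 := by
  apply Subtype.ext
  simp only [sqX, Set.Icc.coe_zero]
  norm_num

theorem sqX_one_right (s : unitInterval) : sqX s 1 = 1 := by
  apply Subtype.ext
  simp only [sqX, Set.Icc.coe_one]
  norm_num

theorem sqX_zero_left (t : unitInterval) : sqX 0 t = t := by
  apply Subtype.ext
  simp only [sqX, Set.Icc.coe_zero]
  ring

theorem sqX_one_left {t : unitInterval} (h : (t : ℝ) < 3 / 4) : sqX 1 t = 0 := by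
  apply Subtype.ext
  simp only [sqX, Set.Icc.coe_one, Set.Icc.coe_zero]
  rw [show max 0 (4 * (t : ℝ) - 3) = 0 from max_eq_left (by linarith)]
  ring

theorem sqY_zero_right (s : unitInterval) : sqY s 0 = 0 := by
  apply Subtype.ext
  simp only [sqY, Set.Icc.coe_zero]
  norm_num

theorem sqY_one_right (s : unitInterval) : sqY s 1 = 1 := by
  apply Subtype.ext
  simp only [sqY, Set.Icc.coe_one]
  norm_num

theorem sqY_zero_left (t : unitInterval) : sqY 0 t = t := by
  apply Subtype.ext
  simp only [sqY, Set.Icc.coe_zero]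
  ring

theorem sqY_one_left {t : unitInterval} (h : (1 : ℝ) / 4 < (t : ℝ)) : sqY 1 t = 1 := by
  apply Subtype.ext
  simp only [sqY, Set.Icc.coe_one]
  rw [show min 1 (4 * (t : ℝ)) = 1 from min_eq_left (by linarith)]
  ring


/-! ### the global squeeze homotopies -/

variable (f g)

def cylPiece (k : C(unitInterval × unitInterval, unitInterval)) :
    C((A × unitInterval) × unitInterval, DoubleMappingCylinder f g) :=
  ⟨fun p => mkQ f g (Sum.inr (Sum.inl (p.1.1, k (p.2, p.1.2)))),
    continuous_quot_mk.comp (continuous_inr.comp (continuous_inl.comp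
      ((continuous_fst.comp continuous_fst).prodMk
        (k.continuous.comp (continuous_snd.prodMk (continuous_snd.comp continuous_fst))))))⟩

def totPiece (k : C(unitInterval × unitInterval, unitInterval)) :
    (X ⊕ (A × unitInterval) ⊕ Y) → C(unitInterval, DoubleMappingCylinder f g) :=
  Sum.elim (fun x => ContinuousMap.const _ (mkQ f g (Sum.inl x)))
    (Sum.elim (fun p => (cylPiece f g k).curry p)
      (fun y => ContinuousMap.const _ (mkQ f g (Sum.inr (Sum.inr y)))))

theorem totPiece_continuous (k : C(unitInterval × unitInterval, unitInterval)) :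
    Continuous (totPiece f g k) :=
  Continuous.sumElim
    (ContinuousMap.continuous_const'.comp (continuous_quot_mk.comp continuous_inl))
    (Continuous.sumElim ((cylPiece f g k).curry.continuous)
      (ContinuousMap.continuous_const'.comp
        (continuous_quot_mk.comp (continuous_inr.comp continuous_inr))))

theorem totPiece_compat (k : C(unitInterval × unitInterval, unitInterval))
    (h0 : ∀ s, k (s, 0) = 0) (h1 : ∀ s, k (s, 1) = 1) :
    ∀ z w, DoubleMappingCylinderRel f g z w → totPiece f g k z = totPiece f g k w := by
  rintro z w h
  cases h with
  | zero a =>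
    ext s
    show mkQ f g (Sum.inr (Sum.inl (a, k (s, 0)))) = mkQ f g (Sum.inl (f a))
    rw [h0 s]
    exact Quot.sound (DoubleMappingCylinderRel.zero a)
  | one a =>
    ext s
    show mkQ f g (Sum.inr (Sum.inl (a, k (s, 1)))) = mkQ f g (Sum.inr (Sum.inr (g a)))
    rw [h1 s]
    exact Quot.sound (DoubleMappingCylinderRel.one a)

def squeezeH (k : C(unitInterval × unitInterval, unitInterval))
    (h0 : ∀ s, k (s, 0) = 0) (h1 : ∀ s, k (s, 1) = 1) :
    C(DoubleMappingCylinder f g × unitInterval, DoubleMappingCylinder f g) :=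
  ContinuousMap.uncurry
    ⟨Quot.lift (totPiece f g k) (totPiece_compat f g k h0 h1),
      continuous_quot_lift _ (totPiece_continuous f g k)⟩

theorem squeezeH_mk (k : C(unitInterval × unitInterval, unitInterval))
    (h0 : ∀ s, k (s, 0) = 0) (h1 : ∀ s, k (s, 1) = 1)
    (z : X ⊕ (A × unitInterval) ⊕ Y) (s : unitInterval) :
    squeezeH f g k h0 h1 (mkQ f g z, s) = totPiece f g k z s := rfl

theorem squeezeH_zero (k : C(unitInterval × unitInterval, unitInterval))
    (h0 : ∀ s, k (s, 0) = 0) (h1 : ∀ s, k (s, 1) = 1)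
    (hid : ∀ t, k (0, t) = t) (m : DoubleMappingCylinder f g) :
    squeezeH f g k h0 h1 (m, 0) = m := by
  induction m using Quot.ind with
  | _ z =>
    rw [squeezeH_mk f g k h0 h1 z 0]
    cases z with
    | inl x => rfl
    | inr z' =>
      cases z' with
      | inl p =>
        show mkQ f g (Sum.inr (Sum.inl (p.1, k (0, p.2)))) = mkQ f g (Sum.inr (Sum.inl p))
        rw [hid]
      | inr y => rfl


/-! ### the partition functions on the cylinder -/

def phiTot (p : X → ℝ) : (X ⊕ (A × unitInterval) ⊕ Y) → ℝ :=
  Sum.elim p (Sum.elim (fun q => p (f q.1) * bX q.2) (fun _ => 0))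

def phiM (p : X → ℝ) : DoubleMappingCylinder f g → ℝ :=
  Quot.lift (phiTot f (Y := Y) p) (by
    rintro z w h
    cases h with
    | zero a => show p (f a) * bX 0 = p (f a); rw [bX_zero, mul_one]
    | one a => show p (f a) * bX 1 = 0; rw [bX_one, mul_zero])

theorem phiM_continuous (p : X → ℝ) (hp : Continuous p) (hf : Continuous f) :
    Continuous (phiM f g p) :=
  continuous_quot_lift _ (Continuous.sumElim hp (Continuous.sumElim
    ((hp.comp (hf.comp continuous_fst)).mul (bX_continuous.comp continuous_snd))
    continuous_const))

def psiTot (p : Y → ℝ) : (X ⊕ (A × unitInterval) ⊕ Y) → ℝ :=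
  Sum.elim (fun _ => 0) (Sum.elim (fun q => p (g q.1) * bY q.2) p)

def psiM (p : Y → ℝ) : DoubleMappingCylinder f g → ℝ :=
  Quot.lift (psiTot g (X := X) p) (by
    rintro z w h
    cases h with
    | zero a => show p (g a) * bY 0 = 0; rw [bY_zero, mul_zero]
    | one a => show p (g a) * bY 1 = p (g a); rw [bY_one, mul_one])

theorem psiM_continuous (p : Y → ℝ) (hp : Continuous p) (hg : Continuous g) :
    Continuous (psiM f g p) :=
  continuous_quot_lift _ (Continuous.sumElim continuous_const (Continuous.sumElim
    ((hp.comp (hg.comp continuous_fst)).mul (bY_continuous.comp continuous_snd))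
    hp))

theorem hasSum_sum_elim {ι κ : Type*} {u : ι → ℝ} {v : κ → ℝ} {a b : ℝ}
    (hu : HasSum u a) (hv : HasSum v b) : HasSum (Sum.elim u v) (a + b) := by
  refine HasSum.add_isCompl Set.isCompl_range_inl_range_inr ?_ ?_
  · exact Sum.inl_injective.hasSum_range_iff.2 hu
  · exact Sum.inr_injective.hasSum_range_iff.2 hv


/-! ### local finiteness -/

theorem locFinPhi (hf : Continuous f) {ι : Type*} (C : ι → Set X) (hC : LocallyFinite C) :
    LocallyFinite (fun i =>
      mkQ f g '' tri (C i) ((f ⁻¹' C i) ×ˢ {t : unitInterval | (t : ℝ) ≤ 2 / 3}) (∅ : Set Y)) := by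
  have satK : ∀ i, Sat f g (tri (C i) ((f ⁻¹' C i) ×ˢ {t : unitInterval | (t : ℝ) ≤ 2 / 3})
      (∅ : Set Y)) := by
    intro i
    apply sat_tri
    · intro a
      simp only [Set.mem_prod, Set.mem_preimage, Set.mem_setOf_eq, Set.Icc.coe_zero]
      constructor
      · rintro ⟨h, -⟩; exact h
      · intro h; exact ⟨h, by norm_num⟩
    · intro a
      simp only [Set.mem_prod, Set.mem_setOf_eq, Set.Icc.coe_one]
      constructor
      · rintro ⟨-, h⟩; norm_num at h
      · rintro ⟨⟩
  -- the neighbourhood for points in the Y part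
  have ypoint : ∀ y : Y, ∃ W ∈ nhds (mkQ f g (Sum.inr (Sum.inr y))),
      {i | ((mkQ f g '' tri (C i) ((f ⁻¹' C i) ×ˢ {t : unitInterval | (t : ℝ) ≤ 2 / 3})
        (∅ : Set Y)) ∩ W).Nonempty}.Finite := by
    intro y
    set T := tri (A := A) (∅ : Set X)
      ((Set.univ : Set A) ×ˢ {t : unitInterval | 2 / 3 < (t : ℝ)}) (Set.univ : Set Y) with hT
    have satT : Sat f g T := by
      apply sat_tri
      · intro a
        simp only [Set.mem_prod, Set.mem_setOf_eq, Set.Icc.coe_zero, Set.mem_empty_iff_false]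
        constructor
        · rintro ⟨-, h⟩; norm_num at h
        · rintro ⟨⟩
      · intro a
        simp only [Set.mem_prod, Set.mem_setOf_eq, Set.Icc.coe_one, Set.mem_univ, iff_true,
          true_and]
        norm_num
    have hTopen : IsOpen T := by
      apply isOpen_tri isOpen_empty _ isOpen_univ
      exact IsOpen.prod isOpen_univ (isOpen_Ioi.preimage continuous_subtype_val)
    refine ⟨mkQ f g '' T, (satT.isOpen_image hTopen).mem_nhds ?_, ?_⟩
    · exact satT.mem_image.2 (by exact Set.mem_univ y)
    · refine Set.Finite.subset (Set.finite_empty) ?_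
      rintro i ⟨m, hmK, hmW⟩
      obtain ⟨z, hz, rfl⟩ := hmK
      have hzT : z ∈ T := (satT.mem_image).1 hmW
      exfalso
      rcases z with x | p | y'
      · exact hzT
      · have h1 : (p.2 : ℝ) ≤ 2 / 3 := hz.2
        have h2 : 2 / 3 < (p.2 : ℝ) := hzT.2
        linarith
      · exact hz
  intro m
  obtain ⟨z, rfl⟩ := Quot.exists_rep m
  -- the neighbourhood for X-like points
  have xpoint : ∀ x : X, ∀ ht : (z = Sum.inl x ∨ ∃ a t, z = Sum.inr (Sum.inl (a, t)) ∧
      f a = x ∧ (t : ℝ) < 1), ∃ W ∈ nhds (mkQ f g z),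
      {i | ((mkQ f g '' tri (C i) ((f ⁻¹' C i) ×ˢ {t : unitInterval | (t : ℝ) ≤ 2 / 3})
        (∅ : Set Y)) ∩ W).Nonempty}.Finite := by
    intro x hx
    obtain ⟨N, hN, hNfin⟩ := hC x
    obtain ⟨N', hN'sub, hN'open, hxN'⟩ := mem_nhds_iff.1 hN
    set T := tri (A := A) N' ((f ⁻¹' N') ×ˢ {t : unitInterval | (t : ℝ) < 1}) (∅ : Set Y)
      with hT
    have satT : Sat f g T := by
      apply sat_tri
      · intro a
        simp only [Set.mem_prod, Set.mem_preimage, Set.mem_setOf_eq, Set.Icc.coe_zero]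
        constructor
        · rintro ⟨h, -⟩; exact h
        · intro h; exact ⟨h, by norm_num⟩
      · intro a
        simp only [Set.mem_prod, Set.mem_setOf_eq, Set.Icc.coe_one, Set.mem_empty_iff_false]
        constructor
        · rintro ⟨-, h⟩; norm_num at h
        · rintro ⟨⟩
    have hTopen : IsOpen T := by
      apply isOpen_tri hN'open _ isOpen_empty
      exact IsOpen.prod (hN'open.preimage hf) (isOpen_Iio.preimage continuous_subtype_val)
    refine ⟨mkQ f g '' T, (satT.isOpen_image hTopen).mem_nhds ?_, ?_⟩
    · apply satT.mem_image.2
      rcases hx with rfl | ⟨a, t, rfl, rfl, ht1⟩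
      · exact hxN'
      · exact ⟨hxN', ht1⟩
    · refine Set.Finite.subset hNfin ?_
      rintro i ⟨m, hmK, hmW⟩
      obtain ⟨w, hw, rfl⟩ := hmK
      have hwT : w ∈ T := (satT.mem_image).1 hmW
      rcases w with x' | p | y'
      · exact ⟨x', hw, hN'sub hwT⟩
      · exact ⟨f p.1, hw.1, hN'sub hwT.1⟩
      · exact absurd hwT (by rintro ⟨⟩)
  rcases z with x | p | y
  · exact xpoint x (Or.inl rfl)
  · obtain ⟨a, t⟩ := p
    by_cases ht : (t : ℝ) < 1
    · exact xpoint (f a) (Or.inr ⟨a, t, rfl, rfl, ht⟩)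
    · have ht1 : t = 1 := Subtype.ext (le_antisymm t.2.2 (not_lt.1 ht))
      subst ht1
      rw [show Quot.mk (DoubleMappingCylinderRel f g) (Sum.inr (Sum.inl (a, 1))) =
          Quot.mk (DoubleMappingCylinderRel f g) (Sum.inr (Sum.inr (g a))) from
        Quot.sound (DoubleMappingCylinderRel.one a)]
      exact ypoint (g a)
  · exact ypoint y


theorem locFinPsi (hg : Continuous g) {ι : Type*} (C : ι → Set Y) (hC : LocallyFinite C) :
    LocallyFinite (fun j =>
      mkQ f g '' tri (∅ : Set X) ((g ⁻¹' C j) ×ˢ {t : unitInterval | (1 : ℝ) / 3 ≤ (t : ℝ)})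
        (C j)) := by
  have xpoint : ∀ x : X, ∃ W ∈ nhds (mkQ f g (Sum.inl x)),
      {j | ((mkQ f g '' tri (∅ : Set X)
        ((g ⁻¹' C j) ×ˢ {t : unitInterval | (1 : ℝ) / 3 ≤ (t : ℝ)}) (C j)) ∩ W).Nonempty}.Finite := by
    intro x
    set T := tri (A := A) (Set.univ : Set X)
      ((Set.univ : Set A) ×ˢ {t : unitInterval | (t : ℝ) < 1 / 3}) (∅ : Set Y) with hT
    have satT : Sat f g T := by
      apply sat_tri
      · intro a
        simp only [Set.mem_prod, Set.mem_setOf_eq, Set.Icc.coe_zero, Set.mem_univ, iff_true,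
          true_and]
        norm_num
      · intro a
        simp only [Set.mem_prod, Set.mem_setOf_eq, Set.Icc.coe_one, Set.mem_empty_iff_false]
        constructor
        · rintro ⟨-, h⟩; norm_num at h
        · rintro ⟨⟩
    have hTopen : IsOpen T := by
      apply isOpen_tri isOpen_univ _ isOpen_empty
      exact IsOpen.prod isOpen_univ (isOpen_Iio.preimage continuous_subtype_val)
    refine ⟨mkQ f g '' T, (satT.isOpen_image hTopen).mem_nhds ?_, ?_⟩
    · exact satT.mem_image.2 (by exact Set.mem_univ x)
    · refine Set.Finite.subset (Set.finite_empty) ?_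
      rintro j ⟨m, hmK, hmW⟩
      obtain ⟨z, hz, rfl⟩ := hmK
      have hzT : z ∈ T := (satT.mem_image).1 hmW
      exfalso
      rcases z with x' | p | y'
      · exact hz
      · have h1 : (1 : ℝ) / 3 ≤ (p.2 : ℝ) := hz.2
        have h2 : (p.2 : ℝ) < 1 / 3 := hzT.2
        linarith
      · exact hzT
  intro m
  obtain ⟨z, rfl⟩ := Quot.exists_rep m
  have ypoint : ∀ y : Y, ∀ ht : (z = Sum.inr (Sum.inr y) ∨ ∃ a t,
      z = Sum.inr (Sum.inl (a, t)) ∧ g a = y ∧ (0 : ℝ) < (t : ℝ)), ∃ W ∈ nhds (mkQ f g z),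
      {j | ((mkQ f g '' tri (∅ : Set X)
        ((g ⁻¹' C j) ×ˢ {t : unitInterval | (1 : ℝ) / 3 ≤ (t : ℝ)}) (C j)) ∩ W).Nonempty}.Finite := by
    intro y hy
    obtain ⟨N, hN, hNfin⟩ := hC y
    obtain ⟨N', hN'sub, hN'open, hyN'⟩ := mem_nhds_iff.1 hN
    set T := tri (A := A) (∅ : Set X) ((g ⁻¹' N') ×ˢ {t : unitInterval | (0 : ℝ) < (t : ℝ)}) N'
      with hT
    have satT : Sat f g T := by
      apply sat_tri
      · intro a
        simp only [Set.mem_prod, Set.mem_setOf_eq, Set.Icc.coe_zero, Set.mem_empty_iff_false]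
        constructor
        · rintro ⟨-, h⟩; norm_num at h
        · rintro ⟨⟩
      · intro a
        simp only [Set.mem_prod, Set.mem_preimage, Set.mem_setOf_eq, Set.Icc.coe_one]
        constructor
        · rintro ⟨h, -⟩; exact h
        · intro h; exact ⟨h, by norm_num⟩
    have hTopen : IsOpen T := by
      apply isOpen_tri isOpen_empty _ hN'open
      exact IsOpen.prod (hN'open.preimage hg) (isOpen_Ioi.preimage continuous_subtype_val)
    refine ⟨mkQ f g '' T, (satT.isOpen_image hTopen).mem_nhds ?_, ?_⟩
    · apply satT.mem_image.2
      rcases hy with rfl | ⟨a, t, rfl, rfl, ht1⟩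
      · exact hyN'
      · exact ⟨hyN', ht1⟩
    · refine Set.Finite.subset hNfin ?_
      rintro j ⟨m, hmK, hmW⟩
      obtain ⟨w, hw, rfl⟩ := hmK
      have hwT : w ∈ T := (satT.mem_image).1 hmW
      rcases w with x' | p | y'
      · exact absurd hwT (by rintro ⟨⟩)
      · exact ⟨g p.1, hw.1, hN'sub hwT.1⟩
      · exact ⟨y', hw, hN'sub hwT⟩
  rcases z with x | p | y
  · exact xpoint x
  · obtain ⟨a, t⟩ := p
    by_cases ht : (0 : ℝ) < (t : ℝ)
    · exact ypoint (g a) (Or.inr ⟨a, t, rfl, rfl, ht⟩)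
    · have ht0 : t = 0 := Subtype.ext (le_antisymm (not_lt.1 ht) t.2.1)
      subst ht0
      rw [show Quot.mk (DoubleMappingCylinderRel f g) (Sum.inr (Sum.inl (a, 0))) =
          Quot.mk (DoubleMappingCylinderRel f g) (Sum.inl (f a)) from
        Quot.sound (DoubleMappingCylinderRel.zero a)]
      exact xpoint (f a)
  · exact ypoint y (Or.inl rfl)


/-! ### ambient contractibility of the thickened sets -/

theorem ambientX (hf : Continuous f) {U : Set X}
    (hU : ∃ x₀ : X, ContinuousMap.Homotopic
      (⟨Subtype.val, continuous_subtype_val⟩ : C(U, X)) (ContinuousMap.const ↥U x₀)) :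
    ∃ m₀ : DoubleMappingCylinder f g, ContinuousMap.Homotopic
      (⟨Subtype.val, continuous_subtype_val⟩ :
        C(↥(mkQ f g '' tri U ((f ⁻¹' U) ×ˢ {t : unitInterval | (t : ℝ) < 3 / 4}) (∅ : Set Y)),
          DoubleMappingCylinder f g))
      (ContinuousMap.const _ m₀) := by
  obtain ⟨x₀, ⟨G⟩⟩ := hU
  classical
  set S := tri (A := A) U ((f ⁻¹' U) ×ˢ {t : unitInterval | (t : ℝ) < 3 / 4}) (∅ : Set Y)
    with hS
  set W := mkQ f g '' S with hW
  -- the squeeze homotopy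
  let k : C(unitInterval × unitInterval, unitInterval) := ⟨fun p => sqX p.1 p.2, continuous_sqX⟩
  have hk0 : ∀ s, k (s, 0) = 0 := fun s => sqX_zero_right s
  have hk1 : ∀ s, k (s, 1) = 1 := fun s => sqX_one_right s
  let H := squeezeH f g k hk0 hk1
  let F1 : C(↥W, DoubleMappingCylinder f g) :=
    ⟨fun u => H ((u : DoubleMappingCylinder f g), 1),
      H.continuous.comp (continuous_subtype_val.prodMk continuous_const)⟩
  have hom1 : ContinuousMap.Homotopic
      (⟨Subtype.val, continuous_subtype_val⟩ : C(↥W, DoubleMappingCylinder f g)) F1 := by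
    let c1 : C(unitInterval × ↥W, DoubleMappingCylinder f g) :=
      ⟨fun p => H ((p.2 : DoubleMappingCylinder f g), p.1),
        H.continuous.comp
          ((continuous_subtype_val.comp continuous_snd).prodMk continuous_fst)⟩
    exact ⟨{ toContinuousMap := c1,
             map_zero_left := fun u => squeezeH_zero f g k hk0 hk1 (fun t => sqX_zero_left t) _,
             map_one_left := fun u => rfl }⟩
  -- F1 factors through U
  have hfac : ∀ u : ↥W, ∃ x : X, x ∈ U ∧ F1 u = mkQ f g (Sum.inl x) := by
    rintro ⟨m, hm⟩
    obtain ⟨z, hz, rfl⟩ := hm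
    rcases z with x | p | y
    · refine ⟨x, hz, ?_⟩
      show (squeezeH f g k hk0 hk1) (mkQ f g (Sum.inl x), 1) = mkQ f g (Sum.inl x)
      rw [squeezeH_mk f g k hk0 hk1]
      rfl
    · obtain ⟨a, t⟩ := p
      obtain ⟨ha, ht⟩ := hz
      refine ⟨f a, ha, ?_⟩
      show (squeezeH f g k hk0 hk1) (mkQ f g (Sum.inr (Sum.inl (a, t))), 1) =
        mkQ f g (Sum.inl (f a))
      rw [squeezeH_mk f g k hk0 hk1]
      show mkQ f g (Sum.inr (Sum.inl (a, sqX 1 t))) = mkQ f g (Sum.inl (f a))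
      rw [sqX_one_left ht]
      exact Quot.sound (DoubleMappingCylinderRel.zero a)
    · exact absurd hz (by rintro ⟨⟩)
  choose rho hrhoU hrhoEq using hfac
  have hrhoCont : Continuous rho := by
    rw [continuous_def]
    intro V hV
    set T := tri (A := A) V ((f ⁻¹' V) ×ˢ {t : unitInterval | (t : ℝ) < 1}) (∅ : Set Y) with hT
    have satT : Sat f g T := by
      apply sat_tri
      · intro a
        simp only [Set.mem_prod, Set.mem_preimage, Set.mem_setOf_eq, Set.Icc.coe_zero]
        constructor
        · rintro ⟨h, -⟩; exact h
        · intro h; exact ⟨h, by norm_num⟩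
      · intro a
        simp only [Set.mem_prod, Set.mem_setOf_eq, Set.Icc.coe_one, Set.mem_empty_iff_false]
        constructor
        · rintro ⟨-, h⟩; norm_num at h
        · rintro ⟨⟩
    have hTopen : IsOpen (mkQ f g '' T) := by
      apply satT.isOpen_image
      apply isOpen_tri hV _ isOpen_empty
      exact IsOpen.prod (hV.preimage hf) (isOpen_Iio.preimage continuous_subtype_val)
    have hpre : rho ⁻¹' V = F1 ⁻¹' (mkQ f g '' T) := by
      ext u
      simp only [Set.mem_preimage]
      rw [hrhoEq u]
      exact (satT.mem_image (z := Sum.inl (rho u))).symm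
    rw [hpre]
    exact hTopen.preimage F1.continuous
  have hom2 : ContinuousMap.Homotopic F1
      (ContinuousMap.const ↥W (mkQ f g (Sum.inl x₀))) := by
    let c2 : C(unitInterval × ↥W, DoubleMappingCylinder f g) :=
      ⟨fun p => mkQ f g (Sum.inl (G (p.1, (⟨rho p.2, hrhoU p.2⟩ : ↥U)))),
        (continuous_quot_mk.comp continuous_inl).comp
          (G.continuous.comp (continuous_fst.prodMk
            (Continuous.subtype_mk (hrhoCont.comp continuous_snd) _)))⟩
    refine ⟨{ toContinuousMap := c2,
              map_zero_left := ?_,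
              map_one_left := ?_ }⟩
    · intro u
      show mkQ f g (Sum.inl (G (0, (⟨rho u, hrhoU u⟩ : ↥U)))) = F1 u
      rw [G.apply_zero]
      exact (hrhoEq u).symm
    · intro u
      show mkQ f g (Sum.inl (G (1, (⟨rho u, hrhoU u⟩ : ↥U)))) =
        (ContinuousMap.const (↥W) (mkQ f g (Sum.inl x₀))) u
      rw [G.apply_one]
      rfl
  exact ⟨mkQ f g (Sum.inl x₀), hom1.trans hom2⟩


theorem ambientY (hg : Continuous g) {U : Set Y}
    (hU : ∃ y₀ : Y, ContinuousMap.Homotopic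
      (⟨Subtype.val, continuous_subtype_val⟩ : C(U, Y)) (ContinuousMap.const ↥U y₀)) :
    ∃ m₀ : DoubleMappingCylinder f g, ContinuousMap.Homotopic
      (⟨Subtype.val, continuous_subtype_val⟩ :
        C(↥(mkQ f g '' tri (∅ : Set X)
            ((g ⁻¹' U) ×ˢ {t : unitInterval | (1 : ℝ) / 4 < (t : ℝ)}) U),
          DoubleMappingCylinder f g))
      (ContinuousMap.const _ m₀) := by
  obtain ⟨y₀, ⟨G⟩⟩ := hU
  classical
  set S := tri (A := A) (∅ : Set X)
    ((g ⁻¹' U) ×ˢ {t : unitInterval | (1 : ℝ) / 4 < (t : ℝ)}) U with hS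
  set W := mkQ f g '' S with hW
  let k : C(unitInterval × unitInterval, unitInterval) := ⟨fun p => sqY p.1 p.2, continuous_sqY⟩
  have hk0 : ∀ s, k (s, 0) = 0 := fun s => sqY_zero_right s
  have hk1 : ∀ s, k (s, 1) = 1 := fun s => sqY_one_right s
  let H := squeezeH f g k hk0 hk1
  let F1 : C(↥W, DoubleMappingCylinder f g) :=
    ⟨fun u => H ((u : DoubleMappingCylinder f g), 1),
      H.continuous.comp (continuous_subtype_val.prodMk continuous_const)⟩
  have hom1 : ContinuousMap.Homotopic
      (⟨Subtype.val, continuous_subtype_val⟩ : C(↥W, DoubleMappingCylinder f g)) F1 := by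
    let c1 : C(unitInterval × ↥W, DoubleMappingCylinder f g) :=
      ⟨fun p => H ((p.2 : DoubleMappingCylinder f g), p.1),
        H.continuous.comp
          ((continuous_subtype_val.comp continuous_snd).prodMk continuous_fst)⟩
    exact ⟨{ toContinuousMap := c1,
             map_zero_left := fun u => squeezeH_zero f g k hk0 hk1 (fun t => sqY_zero_left t) _,
             map_one_left := fun u => rfl }⟩
  have hfac : ∀ u : ↥W, ∃ y : Y, y ∈ U ∧ F1 u = mkQ f g (Sum.inr (Sum.inr y)) := by
    rintro ⟨m, hm⟩
    obtain ⟨z, hz, rfl⟩ := hm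
    rcases z with x | p | y
    · exact absurd hz (by rintro ⟨⟩)
    · obtain ⟨a, t⟩ := p
      obtain ⟨ha, ht⟩ := hz
      refine ⟨g a, ha, ?_⟩
      show (squeezeH f g k hk0 hk1) (mkQ f g (Sum.inr (Sum.inl (a, t))), 1) =
        mkQ f g (Sum.inr (Sum.inr (g a)))
      rw [squeezeH_mk f g k hk0 hk1]
      show mkQ f g (Sum.inr (Sum.inl (a, sqY 1 t))) = mkQ f g (Sum.inr (Sum.inr (g a)))
      rw [sqY_one_left ht]
      exact Quot.sound (DoubleMappingCylinderRel.one a)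
    · refine ⟨y, hz, ?_⟩
      show (squeezeH f g k hk0 hk1) (mkQ f g (Sum.inr (Sum.inr y)), 1) =
        mkQ f g (Sum.inr (Sum.inr y))
      rw [squeezeH_mk f g k hk0 hk1]
      rfl
  choose rho hrhoU hrhoEq using hfac
  have hrhoCont : Continuous rho := by
    rw [continuous_def]
    intro V hV
    set T := tri (A := A) (∅ : Set X) ((g ⁻¹' V) ×ˢ {t : unitInterval | (0 : ℝ) < (t : ℝ)}) V
      with hT
    have satT : Sat f g T := by
      apply sat_tri
      · intro a
        simp only [Set.mem_prod, Set.mem_setOf_eq, Set.Icc.coe_zero, Set.mem_empty_iff_false]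
        constructor
        · rintro ⟨-, h⟩; norm_num at h
        · rintro ⟨⟩
      · intro a
        simp only [Set.mem_prod, Set.mem_preimage, Set.mem_setOf_eq, Set.Icc.coe_one]
        constructor
        · rintro ⟨h, -⟩; exact h
        · intro h; exact ⟨h, by norm_num⟩
    have hTopen : IsOpen (mkQ f g '' T) := by
      apply satT.isOpen_image
      apply isOpen_tri isOpen_empty _ hV
      exact IsOpen.prod (hV.preimage hg) (isOpen_Ioi.preimage continuous_subtype_val)
    have hpre : rho ⁻¹' V = F1 ⁻¹' (mkQ f g '' T) := by
      ext u
      simp only [Set.mem_preimage]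
      rw [hrhoEq u]
      exact (satT.mem_image (z := Sum.inr (Sum.inr (rho u)))).symm
    rw [hpre]
    exact hTopen.preimage F1.continuous
  have hom2 : ContinuousMap.Homotopic F1
      (ContinuousMap.const ↥W (mkQ f g (Sum.inr (Sum.inr y₀)))) := by
    let c2 : C(unitInterval × ↥W, DoubleMappingCylinder f g) :=
      ⟨fun p => mkQ f g (Sum.inr (Sum.inr (G (p.1, (⟨rho p.2, hrhoU p.2⟩ : ↥U))))),
        (continuous_quot_mk.comp (continuous_inr.comp continuous_inr)).comp
          (G.continuous.comp (continuous_fst.prodMk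
            (Continuous.subtype_mk (hrhoCont.comp continuous_snd) _)))⟩
    refine ⟨{ toContinuousMap := c2,
              map_zero_left := ?_,
              map_one_left := ?_ }⟩
    · intro u
      show mkQ f g (Sum.inr (Sum.inr (G (0, (⟨rho u, hrhoU u⟩ : ↥U))))) = F1 u
      rw [G.apply_zero]
      exact (hrhoEq u).symm
    · intro u
      show mkQ f g (Sum.inr (Sum.inr (G (1, (⟨rho u, hrhoU u⟩ : ↥U))))) =
        (ContinuousMap.const (↥W) (mkQ f g (Sum.inr (Sum.inr y₀)))) u
      rw [G.apply_one]
      rfl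
  exact ⟨mkQ f g (Sum.inr (Sum.inr y₀)), hom1.trans hom2⟩

end Stmt9Aux

open Stmt9Aux

/-- the double mapping cylinder of maps into Dold spaces is a Dold space. -/
theorem stmt9 {A X Y : Type u} [TopologicalSpace A] [TopologicalSpace X] [TopologicalSpace Y]
    (f : A → X) (g : A → Y) (hf : Continuous f) (hg : Continuous g)
    (hX : IsDoldSpace X) (hY : IsDoldSpace Y) :
    IsDoldSpace (DoubleMappingCylinder f g) := by
  classical
  obtain ⟨ιX, U, hUcov, ⟨φ, ⟨hφc, hφ01, hφsum⟩, hφlf, hφsub⟩, hUamb⟩ := hX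
  obtain ⟨ιY, V, hVcov, ⟨ψ, ⟨hψc, hψ01, hψsum⟩, hψlf, hψsub⟩, hVamb⟩ := hY
  refine ⟨ιX ⊕ ιY, Sum.elim
    (fun i => mkQ f g '' tri (U i) ((f ⁻¹' U i) ×ˢ {t : unitInterval | (t : ℝ) < 3 / 4})
      (∅ : Set Y))
    (fun j => mkQ f g '' tri (∅ : Set X)
      ((g ⁻¹' V j) ×ˢ {t : unitInterval | (1 : ℝ) / 4 < (t : ℝ)}) (V j)), ?_, ?_, ?_⟩
  · -- the sets cover
    intro m
    obtain ⟨z, rfl⟩ := Quot.exists_rep m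
    rcases z with x | p | y
    · obtain ⟨i, hi⟩ := hUcov x
      exact ⟨Sum.inl i, Set.mem_image_of_mem _ (show Sum.inl x ∈ tri (U i) _ _ from hi)⟩
    · obtain ⟨a, t⟩ := p
      by_cases ht : (t : ℝ) < 3 / 4
      · obtain ⟨i, hi⟩ := hUcov (f a)
        exact ⟨Sum.inl i, Set.mem_image_of_mem _
          (show Sum.inr (Sum.inl (a, t)) ∈ tri (U i) _ _ from ⟨hi, ht⟩)⟩
      · obtain ⟨j, hj⟩ := hVcov (g a)
        refine ⟨Sum.inr j, Set.mem_image_of_mem _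
          (show Sum.inr (Sum.inl (a, t)) ∈ tri _ _ (V j) from ⟨hj, ?_⟩)⟩
        show (1 : ℝ) / 4 < (t : ℝ)
        push_neg at ht
        linarith
    · obtain ⟨j, hj⟩ := hVcov y
      exact ⟨Sum.inr j, Set.mem_image_of_mem _
        (show Sum.inr (Sum.inr y) ∈ tri _ _ (V j) from hj)⟩
  · -- numerability
    have satKPhi : ∀ i : ιX, Sat f g (tri (closure (Function.support (φ i)))
        ((f ⁻¹' closure (Function.support (φ i))) ×ˢ {t : unitInterval | (t : ℝ) ≤ 2 / 3})
        (∅ : Set Y)) := by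
      intro i
      apply sat_tri
      · intro a
        simp only [Set.mem_prod, Set.mem_preimage, Set.mem_setOf_eq, Set.Icc.coe_zero]
        constructor
        · rintro ⟨h, -⟩; exact h
        · intro h; exact ⟨h, by norm_num⟩
      · intro a
        simp only [Set.mem_prod, Set.mem_setOf_eq, Set.Icc.coe_one, Set.mem_empty_iff_false]
        constructor
        · rintro ⟨-, h⟩; norm_num at h
        · rintro ⟨⟩
    have satKPsi : ∀ j : ιY, Sat f g (tri (∅ : Set X)
        ((g ⁻¹' closure (Function.support (ψ j))) ×ˢ
          {t : unitInterval | (1 : ℝ) / 3 ≤ (t : ℝ)})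
        (closure (Function.support (ψ j)))) := by
      intro j
      apply sat_tri
      · intro a
        simp only [Set.mem_prod, Set.mem_setOf_eq, Set.Icc.coe_zero, Set.mem_empty_iff_false]
        constructor
        · rintro ⟨-, h⟩; norm_num at h
        · rintro ⟨⟩
      · intro a
        simp only [Set.mem_prod, Set.mem_preimage, Set.mem_setOf_eq, Set.Icc.coe_one]
        constructor
        · rintro ⟨h, -⟩; exact h
        · intro h; exact ⟨h, by norm_num⟩
    have hclPhi : ∀ i : ιX, closure (Function.support (phiM f g (φ i))) ⊆
        mkQ f g '' tri (closure (Function.support (φ i)))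
          ((f ⁻¹' closure (Function.support (φ i))) ×ˢ {t : unitInterval | (t : ℝ) ≤ 2 / 3})
          (∅ : Set Y) := by
      intro i
      apply closure_minimal
      · intro m hm
        obtain ⟨z, rfl⟩ := Quot.exists_rep m
        rcases z with x | p | y
        · have hm' : φ i x ≠ 0 := hm
          exact Set.mem_image_of_mem _
            (show Sum.inl x ∈ tri _ _ _ from subset_closure hm')
        · obtain ⟨a, t⟩ := p
          have hm' : φ i (f a) * bX t ≠ 0 := hm
          exact Set.mem_image_of_mem _ (show Sum.inr (Sum.inl (a, t)) ∈ tri _ _ _ from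
            ⟨subset_closure (left_ne_zero_of_mul hm'), bX_ne_zero (right_ne_zero_of_mul hm')⟩)
        · have hm' : (0 : ℝ) ≠ 0 := hm
          exact absurd rfl hm'
      · apply (satKPhi i).isClosed_image
        apply isClosed_tri isClosed_closure _ isClosed_empty
        exact IsClosed.prod (isClosed_closure.preimage hf)
          (IsClosed.preimage continuous_subtype_val isClosed_Iic)
    have hclPsi : ∀ j : ιY, closure (Function.support (psiM f g (ψ j))) ⊆
        mkQ f g '' tri (∅ : Set X)
          ((g ⁻¹' closure (Function.support (ψ j))) ×ˢ
            {t : unitInterval | (1 : ℝ) / 3 ≤ (t : ℝ)})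
          (closure (Function.support (ψ j))) := by
      intro j
      apply closure_minimal
      · intro m hm
        obtain ⟨z, rfl⟩ := Quot.exists_rep m
        rcases z with x | p | y
        · have hm' : (0 : ℝ) ≠ 0 := hm
          exact absurd rfl hm'
        · obtain ⟨a, t⟩ := p
          have hm' : ψ j (g a) * bY t ≠ 0 := hm
          exact Set.mem_image_of_mem _ (show Sum.inr (Sum.inl (a, t)) ∈ tri _ _ _ from
            ⟨subset_closure (left_ne_zero_of_mul hm'), bY_ne_zero (right_ne_zero_of_mul hm')⟩)
        · have hm' : ψ j y ≠ 0 := hm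
          exact Set.mem_image_of_mem _
            (show Sum.inr (Sum.inr y) ∈ tri _ _ _ from subset_closure hm')
      · apply (satKPsi j).isClosed_image
        apply isClosed_tri isClosed_empty _ isClosed_closure
        exact IsClosed.prod (isClosed_closure.preimage hg)
          (IsClosed.preimage continuous_subtype_val (isClosed_Ici (a := (1 : ℝ) / 3)))
    refine ⟨Sum.elim (fun i => phiM f g (φ i)) (fun j => psiM f g (ψ j)), ⟨?_, ?_, ?_⟩, ?_, ?_⟩
    · rintro (i | j)
      · exact phiM_continuous f g (φ i) (hφc i) hf
      · exact psiM_continuous f g (ψ j) (hψc j) hg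
    · rintro (i | j) m <;> obtain ⟨z, rfl⟩ := Quot.exists_rep m
      · rcases z with x | p | y
        · exact hφ01 i x
        · constructor
          · exact mul_nonneg (hφ01 i (f p.1)).1 (bX_mem p.2).1
          · exact mul_le_one₀ (hφ01 i (f p.1)).2 (bX_mem p.2).1 (bX_mem p.2).2
        · show (0 : ℝ) ∈ Set.Icc (0 : ℝ) 1
          norm_num
      · rcases z with x | p | y
        · show (0 : ℝ) ∈ Set.Icc (0 : ℝ) 1
          norm_num
        · constructor
          · exact mul_nonneg (hψ01 j (g p.1)).1 (bY_mem p.2).1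
          · exact mul_le_one₀ (hψ01 j (g p.1)).2 (bY_mem p.2).1 (bY_mem p.2).2
        · exact hψ01 j y
    · intro m
      obtain ⟨z, rfl⟩ := Quot.exists_rep m
      rcases z with x | p | y
      · have hfe : (fun k => Sum.elim (fun i => phiM f g (φ i)) (fun j => psiM f g (ψ j)) k
            (Quot.mk (DoubleMappingCylinderRel f g) (Sum.inl x)))
            = Sum.elim (fun i => φ i x) (fun _ : ιY => (0 : ℝ)) :=
          funext fun k => by cases k <;> rfl
        rw [hfe, show (1 : ℝ) = 1 + 0 by norm_num]
        exact hasSum_sum_elim (hφsum x) hasSum_zero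
      · obtain ⟨a, t⟩ := p
        have hfe : (fun k => Sum.elim (fun i => phiM f g (φ i)) (fun j => psiM f g (ψ j)) k
            (Quot.mk (DoubleMappingCylinderRel f g) (Sum.inr (Sum.inl (a, t)))))
            = Sum.elim (fun i => φ i (f a) * bX t) (fun j => ψ j (g a) * bY t) :=
          funext fun k => by cases k <;> rfl
        rw [hfe, show (1 : ℝ) = 1 * bX t + 1 * bY t by rw [one_mul, one_mul, bXY_add]]
        exact hasSum_sum_elim ((hφsum (f a)).mul_right (bX t)) ((hψsum (g a)).mul_right (bY t))
      · have hfe : (fun k => Sum.elim (fun i => phiM f g (φ i)) (fun j => psiM f g (ψ j)) k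
            (Quot.mk (DoubleMappingCylinderRel f g) (Sum.inr (Sum.inr y))))
            = Sum.elim (fun _ : ιX => (0 : ℝ)) (fun j => ψ j y) :=
          funext fun k => by cases k <;> rfl
        rw [hfe, show (1 : ℝ) = 0 + 1 by norm_num]
        exact hasSum_sum_elim hasSum_zero (hψsum y)
    · -- locally finite closures of supports
      have hbig := (locFinPhi f g hf (fun i => closure (Function.support (φ i))) hφlf).sumElim
        (locFinPsi f g hg (fun j => closure (Function.support (ψ j))) hψlf)
      apply hbig.subset
      rintro (i | j)
      · exact hclPhi i
      · exact hclPsi j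
    · -- subordination
      rintro (i | j)
      · refine (hclPhi i).trans (Set.image_mono (tri_mono (hφsub i) ?_ subset_rfl))
        apply Set.prod_mono (Set.preimage_mono (hφsub i))
        intro t ht
        show (t : ℝ) < 3 / 4
        have : (t : ℝ) ≤ 2 / 3 := ht
        linarith
      · refine (hclPsi j).trans (Set.image_mono (tri_mono subset_rfl ?_ (hψsub j)))
        apply Set.prod_mono (Set.preimage_mono (hψsub j))
        intro t ht
        show (1 : ℝ) / 4 < (t : ℝ)
        have : (1 : ℝ) / 3 ≤ (t : ℝ) := ht
        linarith
  · rintro (i | j)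
    · exact ambientX f g hf (hUamb i)
    · exact ambientY f g hg (hVamb j)
end

section
/- The unreduced suspension of any topological space X is a Dold space. -/
open unitInterval

universe u v w

/-- The generating relation of the unreduced suspension: `X × {0}` is collapsed to one
point and `X × {1}` to another point. -/
inductive UnreducedSuspensionRel (X : Type*) :
    (X × unitInterval) → (X × unitInterval) → Prop
  | zero (x y : X) : UnreducedSuspensionRel X (x, 0) (y, 0)
  | one (x y : X) : UnreducedSuspensionRel X (x, 1) (y, 1)

/-- The unreduced suspension of `X`. -/
def UnreducedSuspension (X : Type*) := Quot (UnreducedSuspensionRel X)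

instance (X : Type*) [TopologicalSpace X] : TopologicalSpace (UnreducedSuspension X) :=
  instTopologicalSpaceQuot

open unitInterval Topology Set

namespace Stmt10Aux

variable {X : Type u} [TopologicalSpace X]

abbrev q (X : Type u) [TopologicalSpace X] : X × I → UnreducedSuspension X :=
  Quot.mk _

lemma rel_eq {a b : X × I} (h : q X a = q X b) :
    a.2 = b.2 ∧ (a = b ∨ a.2 = 0 ∨ a.2 = 1) := by
  change Quot.mk _ a = Quot.mk _ b at h
  rw [Quot.eq] at h
  induction h with
  | rel a b h => cases h with
    | zero x y => exact ⟨rfl, Or.inr (Or.inl rfl)⟩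
    | one x y => exact ⟨rfl, Or.inr (Or.inr rfl)⟩
  | refl a => exact ⟨rfl, Or.inl rfl⟩
  | symm a b h ih =>
      refine ⟨ih.1.symm, ?_⟩
      rcases ih.2 with h1 | h1 | h1
      · exact Or.inl h1.symm
      · exact Or.inr (Or.inl (ih.1 ▸ h1))
      · exact Or.inr (Or.inr (ih.1 ▸ h1))
  | trans a b c h1 h2 ih1 ih2 =>
      refine ⟨ih1.1.trans ih2.1, ?_⟩
      rcases ih1.2 with h1 | h1 | h1
      · rcases ih2.2 with h2 | h2 | h2
        · exact Or.inl (h1.trans h2)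
        · exact Or.inr (Or.inl (h1 ▸ h2 : a.2 = 0))
        · exact Or.inr (Or.inr (h1 ▸ h2 : a.2 = 1))
      · exact Or.inr (Or.inl h1)
      · exact Or.inr (Or.inr h1)

/-- The height function on the unreduced suspension. -/
def T (X : Type u) [TopologicalSpace X] : UnreducedSuspension X → ℝ :=
  Quot.lift (fun p => (p.2 : ℝ)) (by rintro a b (⟨x, y⟩ | ⟨x, y⟩) <;> rfl)

lemma continuous_T : Continuous (T X) :=
  continuous_quot_lift _ (continuous_subtype_val.comp continuous_snd)

@[simp] lemma T_mk (p : X × I) : T X (q X p) = (p.2 : ℝ) := rfl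

/-- the "zoom towards 0" reparametrization -/
noncomputable def c0 (s t : I) : I := Set.projIcc 0 1 zero_le_one ((1 - (s : ℝ)) * t)

/-- the "zoom towards 1" reparametrization -/
noncomputable def c1 (s t : I) : I := Set.projIcc 0 1 zero_le_one ((1 - (s : ℝ)) * t + s)

lemma continuous_c0 : Continuous fun p : I × I => c0 p.1 p.2 := by
  apply continuous_projIcc.comp
  continuity

lemma continuous_c1 : Continuous fun p : I × I => c1 p.1 p.2 := by
  apply continuous_projIcc.comp
  continuity

lemma c0_zero (t : I) : c0 0 t = t := by
  simp [c0, Set.projIcc_of_mem _ t.2]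

lemma c1_zero (t : I) : c1 0 t = t := by
  simp [c1, Set.projIcc_of_mem _ t.2]

lemma c0_one (t : I) : c0 1 t = 0 := by
  simp [c0]

lemma c1_one (t : I) : c1 1 t = 1 := by
  simp [c1]

lemma c0_bot (s : I) : c0 s 0 = 0 := by
  simp [c0]

lemma c1_top (s : I) : c1 s 1 = 1 := by
  simp [c1]

lemma key0 {a : X × I} (ha : (a.2 : ℝ) < 1) (s : I) :
    q X ((q X a).out.1, c0 s (q X a).out.2) = q X (a.1, c0 s a.2) := by
  have hb : q X (q X a).out = q X a := Quot.out_eq _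
  obtain ⟨h2, hcase⟩ := rel_eq hb
  rcases hcase with h1 | h1 | h1
  · rw [h1]
  · have ha2 : a.2 = 0 := h2 ▸ h1
    rw [h1, ha2, c0_bot]
    exact Quot.sound (.zero _ _)
  · have ha2 : a.2 = 1 := h2 ▸ h1
    rw [ha2] at ha
    simp at ha
  -- done

lemma key1 {a : X × I} (ha : 0 < (a.2 : ℝ)) (s : I) :
    q X ((q X a).out.1, c1 s (q X a).out.2) = q X (a.1, c1 s a.2) := by
  have hb : q X (q X a).out = q X a := Quot.out_eq _
  obtain ⟨h2, hcase⟩ := rel_eq hb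
  rcases hcase with h1 | h1 | h1
  · rw [h1]
  · have ha2 : a.2 = 0 := h2 ▸ h1
    rw [ha2] at ha
    simp at ha
  · have ha2 : a.2 = 1 := h2 ▸ h1
    rw [h1, ha2, c1_top]
    exact Quot.sound (.one _ _)

end Stmt10Aux

open Stmt10Aux in
/-- the unreduced suspension of any space is a Dold space. -/
theorem stmt10 (X : Type u) [TopologicalSpace X] :
    IsDoldSpace (UnreducedSuspension X) := by
  cases isEmpty_or_nonempty X with
  | inl hX =>
      have hE : IsEmpty (UnreducedSuspension X) :=
        ⟨fun v => hX.false (Quot.out v).1⟩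
      refine ⟨PEmpty.{u + 1}, fun i => ∅, fun v => hE.elim v, ?_, fun i => i.elim⟩
      refine ⟨fun i v => 0, ⟨fun i => continuous_const, fun i v => by simp,
        fun v => hE.elim v⟩, fun v => hE.elim v, fun i => i.elim⟩
  | inr hX =>
      obtain ⟨x0⟩ := hX
      have hopen0 : IsOpen {v : UnreducedSuspension X | T X v < 1} :=
        isOpen_Iio.preimage continuous_T
      have hopen1 : IsOpen {v : UnreducedSuspension X | 0 < T X v} :=
        isOpen_Ioi.preimage continuous_T
      refine ⟨ULift.{u} Bool,
        fun b => if b.down then {v | 0 < T X v} else {v | T X v < 1}, ?_, ?_, ?_⟩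
      · -- cover
        intro v
        rcases lt_or_ge (T X v) 1 with h | h
        · exact ⟨⟨false⟩, h⟩
        · exact ⟨⟨true⟩, show 0 < T X v from lt_of_lt_of_le one_pos h⟩
      · -- numerable
        set g : UnreducedSuspension X → ℝ :=
          fun v => max 0 (min 1 (2 - 3 * T X v)) with hg
        have hgc : Continuous g := by
          apply continuous_const.max
          exact continuous_const.min (continuous_const.sub (continuous_const.mul continuous_T))
        have hg0 : ∀ v, 0 ≤ g v := fun v => le_max_left _ _
        have hg1 : ∀ v, g v ≤ 1 := fun v => max_le zero_le_one (min_le_left _ _)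
        refine ⟨fun b v => if b.down then 1 - g v else g v, ⟨?_, ?_, ?_⟩, ?_, ?_⟩
        · rintro ⟨b⟩
          cases b
          · exact hgc
          · exact continuous_const.sub hgc
        · rintro ⟨b⟩ v
          cases b
          · show g v ∈ Set.Icc (0 : ℝ) 1
            exact ⟨hg0 v, hg1 v⟩
          · show 1 - g v ∈ Set.Icc (0 : ℝ) 1
            exact ⟨by linarith [hg1 v], by linarith [hg0 v]⟩
        · intro v
          have hsum : ∑ b : ULift.{u} Bool, (if b.down then 1 - g v else g v) = 1 := by
            have he := Fintype.sum_equiv (Equiv.ulift : ULift.{u} Bool ≃ Bool)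
              (fun b : ULift.{u} Bool => if b.down then 1 - g v else g v)
              (fun b : Bool => if b then 1 - g v else g v) (fun _ => rfl)
            rw [he, Fintype.sum_bool]
            norm_num
          have hfin := hasSum_fintype
            (fun b : ULift.{u} Bool => if b.down then 1 - g v else g v)
          rwa [hsum] at hfin
        · exact locallyFinite_of_finite _
        · rintro ⟨b⟩
          cases b
          · -- support of g inside {T < 1}
            show closure (Function.support g) ⊆ {v | T X v < 1}
            have hsub : closure (Function.support g) ⊆
                {v : UnreducedSuspension X | T X v ≤ 2 / 3} := by
              apply closure_minimal
              · intro v hv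
                simp only [Function.mem_support] at hv
                have hlt : 0 < g v := lt_of_le_of_ne (hg0 v) (Ne.symm hv)
                have h1 : 0 < min 1 (2 - 3 * T X v) := by
                  rcases lt_max_iff.1 hlt with h | h
                  · exact absurd h (lt_irrefl _)
                  · exact h
                have h2 : 0 < 2 - 3 * T X v := (lt_min_iff.1 h1).2
                show T X v ≤ 2 / 3
                linarith
              · exact IsClosed.preimage continuous_T isClosed_Iic
            intro v hv
            have h3 := hsub hv
            show T X v < 1
            have : T X v ≤ 2 / 3 := h3
            linarith
          · -- support of 1 - g inside {0 < T}
            show closure (Function.support fun v => 1 - g v) ⊆ {v | 0 < T X v}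
            have hsub : closure (Function.support fun v => 1 - g v) ⊆
                {v : UnreducedSuspension X | (1 : ℝ) / 3 ≤ T X v} := by
              apply closure_minimal
              · intro v hv
                simp only [Function.mem_support] at hv
                have hlt : g v < 1 :=
                  lt_of_le_of_ne (hg1 v) (by intro h; apply hv; rw [h]; ring)
                have h1 : min 1 (2 - 3 * T X v) < 1 :=
                  lt_of_le_of_lt (le_max_right _ _) hlt
                have h2 : 2 - 3 * T X v < 1 := by
                  rcases min_lt_iff.1 h1 with h | h
                  · exact absurd h (lt_irrefl _)
                  · exact h
                show (1 : ℝ) / 3 ≤ T X v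
                linarith
              · exact IsClosed.preimage continuous_T isClosed_Ici
            intro v hv
            have h3 : (1 : ℝ) / 3 ≤ T X v := hsub hv
            show 0 < T X v
            linarith
      · -- contractibility
        rintro ⟨b⟩
        cases b
        · -- U₀ = {T < 1}, contract to bottom pole
          show AmbientlyContractible {v | T X v < 1}
          refine ⟨q X (x0, 0), ?_⟩
          set V := {v : UnreducedSuspension X | T X v < 1} with hV
          set H : I × V → UnreducedSuspension X :=
            fun p => q X ((p.2 : UnreducedSuspension X).out.1,
              c0 p.1 (p.2 : UnreducedSuspension X).out.2) with hH
          have hHcont : Continuous H := by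
            have hq' : IsQuotientMap (V.restrictPreimage (q X)) :=
              isQuotientMap_quot_mk.restrictPreimage_isOpen hopen0
            apply hq'.continuous_lift_prod_right
            have heq : (fun p : I × ↑(q X ⁻¹' V) => H (p.1, V.restrictPreimage (q X) p.2)) =
                fun p : I × ↑(q X ⁻¹' V) =>
                  q X ((p.2 : X × I).1, c0 p.1 (p.2 : X × I).2) := by
              funext p
              exact key0 p.2.2 p.1
            rw [heq]
            exact continuous_quot_mk.comp
              (((continuous_subtype_val.comp continuous_snd).fst).prodMk
                (continuous_c0.comp (continuous_fst.prodMk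
                  ((continuous_subtype_val.comp continuous_snd).snd))))
          refine ⟨⟨⟨H, hHcont⟩, ?_, ?_⟩⟩
          · intro u
            show H (0, u) = (u : UnreducedSuspension X)
            simp only [hH, c0_zero]
            rw [Prod.mk.eta]
            exact Quot.out_eq _
          · intro u
            show H (1, u) = q X (x0, 0)
            simp only [hH, c0_one]
            exact Quot.sound (.zero _ _)
        · -- U₁ = {0 < T}, contract to top pole
          show AmbientlyContractible {v | 0 < T X v}
          refine ⟨q X (x0, 1), ?_⟩
          set V := {v : UnreducedSuspension X | 0 < T X v} with hV
          set H : I × V → UnreducedSuspension X :=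
            fun p => q X ((p.2 : UnreducedSuspension X).out.1,
              c1 p.1 (p.2 : UnreducedSuspension X).out.2) with hH
          have hHcont : Continuous H := by
            have hq' : IsQuotientMap (V.restrictPreimage (q X)) :=
              isQuotientMap_quot_mk.restrictPreimage_isOpen hopen1
            apply hq'.continuous_lift_prod_right
            have heq : (fun p : I × ↑(q X ⁻¹' V) => H (p.1, V.restrictPreimage (q X) p.2)) =
                fun p : I × ↑(q X ⁻¹' V) =>
                  q X ((p.2 : X × I).1, c1 p.1 (p.2 : X × I).2) := by
              funext p
              exact key1 p.2.2 p.1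
            rw [heq]
            exact continuous_quot_mk.comp
              (((continuous_subtype_val.comp continuous_snd).fst).prodMk
                (continuous_c1.comp (continuous_fst.prodMk
                  ((continuous_subtype_val.comp continuous_snd).snd))))
          refine ⟨⟨⟨H, hHcont⟩, ?_, ?_⟩⟩
          · intro u
            show H (0, u) = (u : UnreducedSuspension X)
            simp only [hH, c1_zero]
            rw [Prod.mk.eta]
            exact Quot.out_eq _
          · intro u
            show H (1, u) = q X (x0, 1)
            simp only [hH, c1_one]
            exact Quot.sound (.one _ _)
end

section
/- For any continuous map f : A → X into a Dold space X, the unreduced mapping cone of f (the quotient of X ⊔ (A × [0,1]) identifying (a,1) with f(a) and collapsing A × {0} to a point) is a Dold space. -/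
open unitInterval

universe u v w

/-- The generating relation of the unreduced mapping cone of `f : A → X`:
`(a,1) ∼ f a` and `A × {0}` is collapsed to a point. -/
inductive MappingConeRel {A X : Type*} (f : A → X) :
    (X ⊕ (A × unitInterval)) → (X ⊕ (A × unitInterval)) → Prop
  | one (a : A) : MappingConeRel f (Sum.inr (a, 1)) (Sum.inl (f a))
  | zero (a b : A) : MappingConeRel f (Sum.inr (a, 0)) (Sum.inr (b, 0))

/-- The unreduced mapping cone of `f : A → X`. -/
def UnreducedMappingCone {A X : Type*} (f : A → X) := Quot (MappingConeRel f)

instance {A X : Type*} [TopologicalSpace A] [TopologicalSpace X] (f : A → X) :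
    TopologicalSpace (UnreducedMappingCone f) :=
  instTopologicalSpaceQuot

namespace Stmt11Aux
set_option linter.unusedSectionVars false

open Set Function Topology

variable {A X : Type u} [TopologicalSpace A] [TopologicalSpace X] (f : A → X)

/-- Explicit description of the equivalence relation generated by `MappingConeRel`. -/
def Rel' : (X ⊕ (A × I)) → (X ⊕ (A × I)) → Prop
  | Sum.inl x, Sum.inl y => x = y
  | Sum.inl x, Sum.inr p => p.2 = 1 ∧ f p.1 = x
  | Sum.inr p, Sum.inl x => p.2 = 1 ∧ f p.1 = x
  | Sum.inr p, Sum.inr q => p = q ∨ (p.2 = 0 ∧ q.2 = 0) ∨ (p.2 = 1 ∧ q.2 = 1 ∧ f p.1 = f q.1)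

lemma I_zero_ne_one : (0 : I) ≠ 1 := fun h => by
  have := congrArg Subtype.val h
  norm_num at this

lemma rel'_refl : ∀ u, Rel' f u u := by
  rintro (x | p)
  · exact rfl
  · exact Or.inl rfl

lemma rel'_symm : ∀ {u v}, Rel' f u v → Rel' f v u := by
  rintro (x | p) (y | q) h
  · exact Eq.symm h
  · exact h
  · exact h
  · rcases h with h | h | h
    · exact Or.inl h.symm
    · exact Or.inr (Or.inl ⟨h.2, h.1⟩)
    · exact Or.inr (Or.inr ⟨h.2.1, h.1, h.2.2.symm⟩)

lemma rel'_trans : ∀ {u v w : X ⊕ (A × I)}, Rel' f u v → Rel' f v w → Rel' f u w := by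
  rintro (x | ⟨a, s⟩) (y | ⟨b, t⟩) (z | ⟨c, r⟩) h1 h2
  · exact Eq.trans h1 h2
  · exact ⟨h2.1, h2.2.trans (Eq.symm h1)⟩
  · exact h1.2.symm.trans h2.2
  · rcases h2 with heq | ⟨ht0, hr0⟩ | ⟨ht1, hr1, hfe⟩
    · cases heq; exact h1
    · exact absurd (ht0.symm.trans h1.1) I_zero_ne_one
    · exact ⟨hr1, hfe.symm.trans h1.2⟩
  · exact ⟨h1.1, h1.2.trans h2⟩  -- h2 : y = z
  · exact Or.inr (Or.inr ⟨h1.1, h2.1, h1.2.trans h2.2.symm⟩)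
  · rcases h1 with heq | ⟨hs0, ht0⟩ | ⟨hs1, ht1, hfe⟩
    · cases heq; exact h2
    · exact absurd (ht0.symm.trans h2.1) I_zero_ne_one
    · exact ⟨hs1, hfe.trans h2.2⟩
  · rcases h1 with heq | ⟨hs0, ht0⟩ | ⟨hs1, ht1, hfe⟩
    · cases heq; exact h2
    · rcases h2 with heq | ⟨ht0', hr0⟩ | ⟨ht1', hr1, hfe'⟩
      · cases heq; exact Or.inr (Or.inl ⟨hs0, ht0⟩)
      · exact Or.inr (Or.inl ⟨hs0, hr0⟩)
      · exact absurd (ht0.symm.trans ht1') I_zero_ne_one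
    · rcases h2 with heq | ⟨ht0', hr0⟩ | ⟨ht1', hr1, hfe'⟩
      · cases heq; exact Or.inr (Or.inr ⟨hs1, ht1, hfe⟩)
      · exact absurd (ht0'.symm.trans ht1) I_zero_ne_one
      · exact Or.inr (Or.inr ⟨hs1, hr1, hfe.trans hfe'⟩)

lemma rel'_iff {u v : X ⊕ (A × I)} :
    Quot.mk (MappingConeRel f) u = Quot.mk (MappingConeRel f) v ↔ Rel' f u v := by
  constructor
  · intro h
    have H := Quot.eqvGen_exact h
    clear h
    induction H with
    | rel x y hr =>
        cases hr with
        | one a => exact ⟨rfl, rfl⟩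
        | zero a b => exact Or.inr (Or.inl ⟨rfl, rfl⟩)
    | refl x => exact rel'_refl f x
    | symm x y _ ih => exact rel'_symm f ih
    | trans x y z _ _ ih1 ih2 => exact rel'_trans f ih1 ih2
  · intro h
    rcases u with x | ⟨a, t⟩ <;> rcases v with y | ⟨b, r⟩
    · rw [show x = y from h]
    · obtain ⟨hr, hx⟩ := h
      subst hx; subst hr
      exact (Quot.sound (.one b)).symm
    · obtain ⟨ht, hy⟩ := h
      subst hy; subst ht
      exact Quot.sound (.one a)
    · rcases h with heq | ⟨ht, hr⟩ | ⟨ht, hr, hfe⟩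
      · rw [heq]
      · subst ht; subst hr; exact Quot.sound (.zero a b)
      · subst ht; subst hr
        refine (Quot.sound (.one a)).trans (.trans ?_ (Quot.sound (.one b)).symm)
        rw [hfe]

lemma sat_preimage {S : Set (X ⊕ (A × I))}
    (hS : ∀ u ∈ S, ∀ v, Rel' f u v → v ∈ S) :
    Quot.mk (MappingConeRel f) ⁻¹' (Quot.mk (MappingConeRel f) '' S) = S := by
  apply Subset.antisymm
  · rintro u ⟨w, hw, he⟩
    exact hS w hw u ((rel'_iff f).1 he)
  · exact Set.subset_preimage_image _ _

lemma isOpen_image_sat {S : Set (X ⊕ (A × I))}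
    (hS : ∀ u ∈ S, ∀ v, Rel' f u v → v ∈ S) (h : IsOpen S) :
    IsOpen (Quot.mk (MappingConeRel f) '' S) := by
  rw [← isQuotientMap_quot_mk.isOpen_preimage, sat_preimage f hS]
  exact h

lemma isClosed_image_sat {S : Set (X ⊕ (A × I))}
    (hS : ∀ u ∈ S, ∀ v, Rel' f u v → v ∈ S) (h : IsClosed S) :
    IsClosed (Quot.mk (MappingConeRel f) '' S) := by
  rw [← isQuotientMap_quot_mk.isClosed_preimage, sat_preimage f hS]
  exact h


/-! ### The embedding of `X` into the cone -/

def jX : X → UnreducedMappingCone f := fun x => Quot.mk _ (Sum.inl x)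

lemma continuous_jX : Continuous (jX f) := continuous_quot_mk.comp continuous_inl

lemma injective_jX : Function.Injective (jX f) := fun x y h => (rel'_iff f).1 h

lemma isClosedEmbedding_jX (hf : Continuous f) : IsClosedEmbedding (jX f) := by
  refine IsClosedEmbedding.of_continuous_injective_isClosedMap (continuous_jX f)
    (injective_jX f) ?_
  intro D hD
  have himg : jX f '' D = Quot.mk (MappingConeRel f) ''
      (Sum.inl '' D ∪ Sum.inr '' ((f ⁻¹' D) ×ˢ ({1} : Set I))) := by
    apply Set.Subset.antisymm
    · rintro _ ⟨x, hx, rfl⟩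
      exact ⟨Sum.inl x, Or.inl ⟨x, hx, rfl⟩, rfl⟩
    · rintro _ ⟨w, hw, rfl⟩
      rcases hw with ⟨x, hx, rfl⟩ | ⟨⟨a, t⟩, ⟨ha, ht⟩, rfl⟩
      · exact ⟨x, hx, rfl⟩
      · refine ⟨f a, ha, ?_⟩
        cases ht
        exact (Quot.sound (.one a)).symm
  rw [himg]
  apply isClosed_image_sat
  · rintro (x | ⟨a, t⟩) hu v hrel
    · rcases hu with ⟨y, hy, hyx⟩ | ⟨⟨a, t⟩, ⟨ha, ht⟩, h⟩
      · obtain rfl : y = x := Sum.inl.inj hyx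
        rcases v with z | ⟨b, r⟩
        · exact Or.inl ⟨y, hy, by rw [show y = z from hrel]⟩
        · exact Or.inr ⟨(b, r), ⟨by rw [Set.mem_preimage, hrel.2]; exact hy, hrel.1⟩, rfl⟩
      · exact absurd h (by simp)
    · rcases hu with ⟨y, hy, h⟩ | ⟨⟨a', t'⟩, ⟨ha, ht⟩, h⟩
      · exact absurd h (by simp)
      · cases h
        have ht1 : t = 1 := ht
        rcases v with z | ⟨b, r⟩
        · exact Or.inl ⟨z, by rw [← hrel.2]; exact ha, rfl⟩
        · rcases hrel with heq | ⟨h0, _⟩ | ⟨_, hr1, hfe⟩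
          · cases heq; exact Or.inr ⟨(a, t), ⟨ha, ht⟩, rfl⟩
          · exact absurd (h0.symm.trans ht1) I_zero_ne_one
          · exact Or.inr ⟨(b, r), ⟨by rw [Set.mem_preimage, ← hfe]; exact ha, hr1⟩, rfl⟩
  · exact ((IsClosedEmbedding.inl.isClosedMap _ hD).union
      (IsClosedEmbedding.inr.isClosedMap _
        ((hD.preimage hf).prod (isClosed_singleton : IsClosed ({1} : Set I)))))

/-! ### Homotopies on the cone induced by reparametrizations of the cone coordinate -/

/-- The family of maps `I → Cone` indexed by points of `X ⊕ A × I`. -/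
noncomputable def coneFam (φ : C(I × I, I)) : (X ⊕ (A × I)) → C(I, UnreducedMappingCone f) :=
  Sum.elim (fun x => ContinuousMap.const I (Quot.mk _ (Sum.inl x)))
    ⇑(ContinuousMap.curry
      ⟨fun p : (A × I) × I => Quot.mk (MappingConeRel f) (Sum.inr (p.1.1, φ (p.2, p.1.2))),
        continuous_quot_mk.comp (continuous_inr.comp
          ((continuous_fst.fst).prodMk
            (φ.continuous.comp (continuous_snd.prodMk continuous_fst.snd))))⟩)

lemma continuous_coneFam (φ : C(I × I, I)) : Continuous (coneFam f φ) :=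
  Continuous.sumElim
    (ContinuousMap.continuous_const'.comp (continuous_quot_mk.comp continuous_inl))
    (ContinuousMap.continuous _)

lemma coneFam_rel (φ : C(I × I, I)) (h1 : ∀ s, φ (s, 1) = 1) (h0 : ∀ s, φ (s, 0) = 0)
    {u v : X ⊕ (A × I)} (h : MappingConeRel f u v) : coneFam f φ u = coneFam f φ v := by
  cases h with
  | one a =>
      ext s
      show Quot.mk (MappingConeRel f) (Sum.inr (a, φ (s, 1))) = Quot.mk _ (Sum.inl (f a))
      rw [h1 s]
      exact Quot.sound (.one a)
  | zero a b =>
      ext s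
      show Quot.mk (MappingConeRel f) (Sum.inr (a, φ (s, 0)))
        = Quot.mk (MappingConeRel f) (Sum.inr (b, φ (s, 0)))
      rw [h0 s]
      exact Quot.sound (.zero a b)

/-- Homotopy on the whole cone induced by a reparametrization `φ` of the cone coordinate. -/
noncomputable def coneHomotopy (φ : C(I × I, I)) (h1 : ∀ s, φ (s, 1) = 1)
    (h0 : ∀ s, φ (s, 0) = 0) : C(UnreducedMappingCone f × I, UnreducedMappingCone f) :=
  ⟨fun p => Quot.lift (coneFam f φ) (fun _ _ h => coneFam_rel f φ h1 h0 h) p.1 p.2,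
    (ContinuousMap.uncurry
      ⟨Quot.lift (coneFam f φ) (fun _ _ h => coneFam_rel f φ h1 h0 h),
        continuous_quot_lift _ (continuous_coneFam f φ)⟩).continuous⟩

lemma coneHomotopy_inl (φ : C(I × I, I)) (h1 h0) (x : X) (s : I) :
    coneHomotopy f φ h1 h0 (Quot.mk _ (Sum.inl x), s) = Quot.mk _ (Sum.inl x) := rfl

lemma coneHomotopy_inr (φ : C(I × I, I)) (h1 h0) (a : A) (t s : I) :
    coneHomotopy f φ h1 h0 (Quot.mk _ (Sum.inr (a, t)), s)
      = Quot.mk _ (Sum.inr (a, φ (s, t))) := rfl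

/-! ### The two reparametrizations -/

lemma projIcc_eq (r : ℝ) (t : I) (h : r = (t : ℝ)) :
    Set.projIcc (0 : ℝ) 1 zero_le_one r = t := by
  rw [h]; exact Set.projIcc_val zero_le_one t

/-- Slides the cone coordinate down to `0` on the region `t ≤ 3/4`. -/
noncomputable def phiDown : C(I × I, I) :=
  ⟨fun p => Set.projIcc (0 : ℝ) 1 zero_le_one
      ((p.2 : ℝ) * (1 - (p.1 : ℝ) * min 1 (4 * (1 - (p.2 : ℝ))))),
    continuous_projIcc.comp (by fun_prop)⟩

/-- Slides the cone coordinate up to `1` on the region `t ≥ 1/3`. -/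
noncomputable def phiUp : C(I × I, I) :=
  ⟨fun p => Set.projIcc (0 : ℝ) 1 zero_le_one
      ((p.2 : ℝ) + (p.1 : ℝ) * min 1 (3 * (p.2 : ℝ)) * (1 - (p.2 : ℝ))),
    continuous_projIcc.comp (by fun_prop)⟩

lemma phiDown_one (s : I) : phiDown (s, 1) = 1 := projIcc_eq _ _ (by norm_num)

lemma phiDown_zero (s : I) : phiDown (s, 0) = 0 := projIcc_eq _ _ (by norm_num)

lemma phiDown_start (t : I) : phiDown (0, t) = t := projIcc_eq _ _ (by norm_num)

lemma phiDown_end (t : I) (ht : (t : ℝ) ≤ 3 / 4) : phiDown (1, t) = 0 := by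
  refine projIcc_eq _ _ ?_
  have h1 : min 1 (4 * (1 - (t : ℝ))) = 1 := min_eq_left (by linarith)
  show (t : ℝ) * (1 - ((1 : I) : ℝ) * min 1 (4 * (1 - (t : ℝ)))) = ((0 : I) : ℝ)
  rw [h1]; norm_num

lemma phiUp_one (s : I) : phiUp (s, 1) = 1 := projIcc_eq _ _ (by norm_num)

lemma phiUp_zero (s : I) : phiUp (s, 0) = 0 := projIcc_eq _ _ (by norm_num)

lemma phiUp_start (t : I) : phiUp (0, t) = t := projIcc_eq _ _ (by norm_num)

lemma phiUp_end (t : I) (ht : 1 / 3 < (t : ℝ)) : phiUp (1, t) = 1 := by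
  refine projIcc_eq _ _ ?_
  have h1 : min 1 (3 * (t : ℝ)) = 1 := min_eq_left (by linarith)
  show (t : ℝ) + ((1 : I) : ℝ) * min 1 (3 * (t : ℝ)) * (1 - (t : ℝ)) = ((1 : I) : ℝ)
  rw [h1]; norm_num

/-- The downward homotopy. -/
noncomputable def Gdown : C(UnreducedMappingCone f × I, UnreducedMappingCone f) :=
  coneHomotopy f phiDown phiDown_one phiDown_zero

/-- The upward homotopy. -/
noncomputable def Gup : C(UnreducedMappingCone f × I, UnreducedMappingCone f) :=
  coneHomotopy f phiUp phiUp_one phiUp_zero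

lemma Gdown_zero (c : UnreducedMappingCone f) : Gdown f (c, 0) = c := by
  induction c using Quot.ind with
  | _ u =>
    rcases u with x | ⟨a, t⟩
    · rfl
    · show Quot.mk (MappingConeRel f) (Sum.inr (a, phiDown (0, t))) = _
      rw [phiDown_start]

lemma Gup_zero (c : UnreducedMappingCone f) : Gup f (c, 0) = c := by
  induction c using Quot.ind with
  | _ u =>
    rcases u with x | ⟨a, t⟩
    · rfl
    · show Quot.mk (MappingConeRel f) (Sum.inr (a, phiUp (0, t))) = _
      rw [phiUp_start]


/-! ### The bump function on the cone coordinate -/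

noncomputable def lam (t : I) : ℝ := min 1 (max 0 (3 - 5 * (t : ℝ)))

lemma lam_continuous : Continuous lam := by unfold lam; fun_prop

lemma lam_nonneg (t : I) : 0 ≤ lam t := le_min zero_le_one (le_max_left _ _)

lemma lam_le_one (t : I) : lam t ≤ 1 := min_le_left _ _

lemma lam_one : lam 1 = 0 := by norm_num [lam]

lemma lam_zero : lam 0 = 1 := by norm_num [lam]

lemma lam_eq_zero_of (t : I) (ht : 3 / 5 ≤ (t : ℝ)) : lam t = 0 := by
  rw [lam, max_eq_left (by linarith), min_eq_right zero_le_one]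

lemma lam_eq_one_of (t : I) (ht : (t : ℝ) ≤ 2 / 5) : lam t = 1 := by
  rw [lam, max_eq_right (by linarith), min_eq_left (by linarith)]

/-! ### Sums over `Option` -/

lemma hasSum_option {ι : Type*} (g : Option ι → ℝ) {a : ℝ}
    (h : HasSum (fun i => g (some i)) a) : HasSum g (g none + a) := by
  classical
  have h1 : HasSum (fun o : Option ι => if o = none then g none else 0) (g none) :=
    hasSum_ite_eq none (g none)
  have h2 : HasSum (fun o : Option ι => if o = none then 0 else g o) a := by
    refine (Function.Injective.hasSum_iff (Option.some_injective ι) ?_).1 ?_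
    · intro o ho
      cases o with
      | none => simp
      | some i => exact absurd ⟨i, rfl⟩ ho
    · convert h using 1; funext i; simp
  have h3 := h1.add h2
  convert h3 using 1
  funext o
  cases o <;> simp

/-! ### The partition of unity on the cone -/

variable {ι₀ : Type v}

noncomputable def psi (φP : ι₀ → X → ℝ) : Option ι₀ → UnreducedMappingCone f → ℝ
  | none => Quot.lift (Sum.elim (fun _ => (0 : ℝ)) (fun p => lam p.2)) (by
      rintro u v (⟨a⟩ | ⟨a, b⟩)
      · show lam 1 = 0
        exact lam_one
      · rfl)
  | some i => Quot.lift
      (Sum.elim (fun x => φP i x) (fun p => (1 - lam p.2) * φP i (f p.1))) (by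
      rintro u v (⟨a⟩ | ⟨a, b⟩)
      · show (1 - lam 1) * φP i (f a) = φP i (f a)
        rw [lam_one]; ring
      · show (1 - lam 0) * φP i (f a) = (1 - lam 0) * φP i (f b)
        rw [lam_zero]; ring)

lemma psi_none_inl (φP : ι₀ → X → ℝ) (x : X) :
    psi f φP none (Quot.mk _ (Sum.inl x)) = 0 := rfl

lemma psi_none_inr (φP : ι₀ → X → ℝ) (a : A) (t : I) :
    psi f φP none (Quot.mk _ (Sum.inr (a, t))) = lam t := rfl

lemma psi_some_inl (φP : ι₀ → X → ℝ) (i : ι₀) (x : X) :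
    psi f φP (some i) (Quot.mk _ (Sum.inl x)) = φP i x := rfl

lemma psi_some_inr (φP : ι₀ → X → ℝ) (i : ι₀) (a : A) (t : I) :
    psi f φP (some i) (Quot.mk _ (Sum.inr (a, t))) = (1 - lam t) * φP i (f a) := rfl

/-! ### The cover sets -/

/-- `S`-shaped saturated subsets: points of `S ⊆ X` together with cone points over `f ⁻¹' S`
with cone coordinate in `P`. -/
def SAbove (S : Set X) (P : Set I) : Set (X ⊕ (A × I)) :=
  Sum.inl '' S ∪ Sum.inr '' ((f ⁻¹' S) ×ˢ P)

/-- Low cone region. -/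
def SLow (P : Set I) : Set (X ⊕ (A × I)) :=
  Sum.inr '' ((Set.univ : Set A) ×ˢ P)

lemma sat_SAbove (S : Set X) (P : Set I) (hP1 : (1 : I) ∈ P) (hP0 : (0 : I) ∉ P) :
    ∀ u ∈ SAbove f S P, ∀ v, Rel' f u v → v ∈ SAbove f S P := by
  rintro (x | ⟨a, t⟩) hu (y | ⟨b, r⟩) hrel
  · rcases hu with ⟨x', hx', h⟩ | ⟨⟨a, t⟩, _, h⟩
    · obtain rfl : x' = x := Sum.inl.inj h
      exact Or.inl ⟨x', hx', by rw [show x' = y from hrel]⟩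
    · exact absurd h (by simp)
  · rcases hu with ⟨x', hx', h⟩ | ⟨⟨a, t⟩, _, h⟩
    · obtain rfl : x' = x := Sum.inl.inj h
      exact Or.inr ⟨(b, r), ⟨by rw [Set.mem_preimage, hrel.2]; exact hx', Set.mem_of_eq_of_mem hrel.1 hP1⟩, rfl⟩
    · exact absurd h (by simp)
  · rcases hu with ⟨x', _, h⟩ | ⟨⟨a', t'⟩, ⟨ha', ht'⟩, h⟩
    · exact absurd h (by simp)
    · obtain ⟨rfl, rfl⟩ : a' = a ∧ t' = t := by
        have := Sum.inr.inj h; exact ⟨congrArg Prod.fst this, congrArg Prod.snd this⟩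
      exact Or.inl ⟨y, by rw [← hrel.2]; exact ha', rfl⟩
  · rcases hu with ⟨x', _, h⟩ | ⟨⟨a', t'⟩, ⟨ha', ht'⟩, h⟩
    · exact absurd h (by simp)
    · obtain ⟨rfl, rfl⟩ : a' = a ∧ t' = t := by
        have := Sum.inr.inj h; exact ⟨congrArg Prod.fst this, congrArg Prod.snd this⟩
      rcases hrel with heq | ⟨h0, _⟩ | ⟨_, hr1, hfe⟩
      · exact Or.inr ⟨(b, r), ⟨(congrArg Prod.fst heq) ▸ ha', (congrArg Prod.snd heq) ▸ ht'⟩, rfl⟩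
      · exact absurd (Set.mem_of_eq_of_mem h0.symm ht') hP0
      · refine Or.inr ⟨(b, r), ⟨by rw [Set.mem_preimage, ← hfe]; exact ha', Set.mem_of_eq_of_mem hr1 hP1⟩, rfl⟩

lemma sat_SLow (P : Set I) (hP0 : (0 : I) ∈ P) (hP1 : (1 : I) ∉ P) :
    ∀ u ∈ SLow (A := A) (X := X) P, ∀ v, Rel' f u v → v ∈ SLow P := by
  rintro (x | ⟨a, t⟩) hu (y | ⟨b, r⟩) hrel
  · exact absurd hu (by rintro ⟨p, _, h⟩; simp at h)
  · exact absurd hu (by rintro ⟨p, _, h⟩; simp at h)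
  · obtain ⟨⟨a', t'⟩, ⟨_, ht'⟩, h⟩ := hu
    obtain ⟨rfl, rfl⟩ : a' = a ∧ t' = t := by
      have := Sum.inr.inj h; exact ⟨congrArg Prod.fst this, congrArg Prod.snd this⟩
    exact absurd (Set.mem_of_eq_of_mem hrel.1.symm ht') hP1
  · obtain ⟨⟨a', t'⟩, ⟨_, ht'⟩, h⟩ := hu
    obtain ⟨rfl, rfl⟩ : a' = a ∧ t' = t := by
      have := Sum.inr.inj h; exact ⟨congrArg Prod.fst this, congrArg Prod.snd this⟩
    rcases hrel with heq | ⟨_, hr0⟩ | ⟨h1, _, _⟩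
    · exact ⟨(b, r), ⟨trivial, (congrArg Prod.snd heq) ▸ ht'⟩, rfl⟩
    · exact ⟨(b, r), ⟨trivial, Set.mem_of_eq_of_mem hr0 hP0⟩, rfl⟩
    · exact absurd (Set.mem_of_eq_of_mem h1.symm ht') hP1

def bigW : Set (UnreducedMappingCone f) :=
  Quot.mk _ '' SLow {t : I | (t : ℝ) ≤ 3 / 4}

def bigV (S : Set X) : Set (UnreducedMappingCone f) :=
  Quot.mk _ '' SAbove f S {t : I | 1 / 3 < (t : ℝ)}

def bigT (S : Set X) : Set (UnreducedMappingCone f) :=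
  Quot.mk _ '' SAbove f S {t : I | 2 / 5 ≤ (t : ℝ)}


/-! ### Topological properties of the cover sets -/

lemma sat_bigW : ∀ u ∈ SLow (A := A) (X := X) {t : I | (t : ℝ) ≤ 3 / 4}, ∀ v,
    Rel' f u v → v ∈ SLow {t : I | (t : ℝ) ≤ 3 / 4} :=
  sat_SLow f _ (by norm_num) (by norm_num)

lemma isClosed_bigW : IsClosed (bigW f) := by
  apply isClosed_image_sat f (sat_bigW f)
  exact IsClosedEmbedding.inr.isClosedMap _
    (isClosed_univ.prod (isClosed_le continuous_subtype_val continuous_const))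

lemma isClosed_bigT (hf : Continuous f) (S : Set X) (hS : IsClosed S) :
    IsClosed (bigT f S) := by
  apply isClosed_image_sat f (sat_SAbove f S _ (by norm_num) (by norm_num))
  exact (IsClosedEmbedding.inl.isClosedMap _ hS).union
    (IsClosedEmbedding.inr.isClosedMap _
      ((hS.preimage hf).prod (isClosed_le continuous_const continuous_subtype_val)))

lemma isOpen_SAbove (hf : Continuous f) (N : Set X) (hN : IsOpen N) (P : Set I)
    (hP : IsOpen P) : IsOpen (SAbove f N P) :=
  (IsOpenEmbedding.inl.isOpenMap _ hN).union
    (IsOpenEmbedding.inr.isOpenMap _ ((hN.preimage hf).prod hP))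

/-! ### Ambient contractibility of the cover sets -/

lemma ambient_bigW (hA : Nonempty A) : AmbientlyContractible (bigW f) := by
  obtain ⟨a₀⟩ := hA
  refine ⟨Quot.mk _ (Sum.inr (a₀, 0)), ⟨?_⟩⟩
  refine ⟨⟨fun p => Gdown f ((p.2 : UnreducedMappingCone f), p.1),
      (Gdown f).continuous.comp
        ((continuous_subtype_val.comp continuous_snd).prodMk continuous_fst)⟩,
    fun w => Gdown_zero f w, ?_⟩
  intro w
  obtain ⟨u, hu, hval⟩ := w.2
  obtain ⟨⟨a, t⟩, ⟨-, ht⟩, rfl⟩ := hu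
  show Gdown f ((w : UnreducedMappingCone f), 1) = _
  rw [← hval]
  show Quot.mk (MappingConeRel f) (Sum.inr (a, phiDown (1, t))) = _
  rw [phiDown_end t ht]
  exact Quot.sound (.zero a a₀)

lemma ambient_bigV (hf : Continuous f) (S : Set X) (hS : AmbientlyContractible S) :
    AmbientlyContractible (bigV f S) := by
  obtain ⟨x₀, ⟨F⟩⟩ := hS
  have hrep : ∀ v : ↥(bigV f S), ∃ u : X, u ∈ S ∧
      Gup f ((v : UnreducedMappingCone f), 1) = jX f u := by
    rintro ⟨v, u, hu, rfl⟩
    rcases hu with ⟨x, hx, rfl⟩ | ⟨⟨a, t⟩, ⟨ha, ht⟩, rfl⟩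
    · exact ⟨x, hx, rfl⟩
    · refine ⟨f a, ha, ?_⟩
      show Quot.mk (MappingConeRel f) (Sum.inr (a, phiUp (1, t))) = _
      rw [phiUp_end t ht]
      exact Quot.sound (.one a)
  choose e he1 he2 using hrep
  have hce : Continuous e := by
    rw [(isClosedEmbedding_jX f hf).isInducing.continuous_iff]
    have : (jX f ∘ e) = fun v : ↥(bigV f S) => Gup f ((v : UnreducedMappingCone f), 1) :=
      funext fun v => (he2 v).symm
    rw [this]
    exact (Gup f).continuous.comp (continuous_subtype_val.prodMk continuous_const)
  let e' : ↥(bigV f S) → ↥S := fun v => ⟨e v, he1 v⟩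
  have hce' : Continuous e' := hce.subtype_mk _
  let jve : C(↥(bigV f S), UnreducedMappingCone f) :=
    ⟨fun v => jX f (e v), (continuous_jX f).comp hce⟩
  refine ⟨jX f x₀, ?_⟩
  have H1 : (⟨Subtype.val, continuous_subtype_val⟩ :
      C(↥(bigV f S), UnreducedMappingCone f)).Homotopic jve :=
    ⟨⟨⟨fun p => Gup f ((p.2 : UnreducedMappingCone f), p.1),
        (Gup f).continuous.comp
          ((continuous_subtype_val.comp continuous_snd).prodMk continuous_fst)⟩,
      fun v => Gup_zero f v, fun v => he2 v⟩⟩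
  have H2 : jve.Homotopic (ContinuousMap.const _ (jX f x₀)) :=
    ⟨⟨⟨fun p => jX f (F (p.1, e' p.2)),
        (continuous_jX f).comp (F.continuous.comp
          (continuous_fst.prodMk (hce'.comp continuous_snd)))⟩,
      fun v => congrArg (jX f) (F.map_zero_left (e' v)),
      fun v => congrArg (jX f) (F.map_one_left (e' v))⟩⟩
  exact H1.trans H2


/-! ### Support estimates -/

lemma closure_supp_none_subset (φP : ι₀ → X → ℝ) :
    closure (Function.support (psi f φP none)) ⊆ bigW f := by
  refine closure_minimal ?_ (isClosed_bigW f)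
  intro c hc
  obtain ⟨u, rfl⟩ := Quot.exists_rep c
  rcases u with x | ⟨a, t⟩
  · exact absurd (psi_none_inl f φP x) hc
  · have hlam : lam t ≠ 0 := hc
    have ht : (t : ℝ) ≤ 3 / 4 := by
      by_contra hgt
      push_neg at hgt
      exact hlam (lam_eq_zero_of t (by linarith))
    exact ⟨Sum.inr (a, t), ⟨(a, t), ⟨trivial, ht⟩, rfl⟩, rfl⟩

lemma closure_supp_some_subset (hf : Continuous f) (φP : ι₀ → X → ℝ) (i : ι₀) :
    closure (Function.support (psi f φP (some i))) ⊆
      bigT f (closure (Function.support (φP i))) := by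
  refine closure_minimal ?_ (isClosed_bigT f hf _ isClosed_closure)
  intro c hc
  obtain ⟨u, rfl⟩ := Quot.exists_rep c
  rcases u with x | ⟨a, t⟩
  · have hx : φP i x ≠ 0 := hc
    exact ⟨Sum.inl x, Or.inl ⟨x, subset_closure hx, rfl⟩, rfl⟩
  · have hm : (1 - lam t) * φP i (f a) ≠ 0 := hc
    obtain ⟨h1, h2⟩ := mul_ne_zero_iff.1 hm
    have ht : 2 / 5 ≤ (t : ℝ) := by
      by_contra hlt
      push_neg at hlt
      exact h1 (by rw [lam_eq_one_of t hlt.le]; ring)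
    exact ⟨Sum.inr (a, t), Or.inr ⟨(a, t), ⟨subset_closure h2, ht⟩, rfl⟩, rfl⟩

lemma bigT_subset_bigV (S S' : Set X) (h : S ⊆ S') : bigT f S ⊆ bigV f S' := by
  refine Set.image_mono (Set.union_subset_union ?_ ?_)
  · exact Set.image_mono h
  · refine Set.image_mono (Set.prod_mono (Set.preimage_mono h) ?_)
    intro t ht
    show 1 / 3 < (t : ℝ)
    have : 2 / 5 ≤ (t : ℝ) := ht
    linarith

end Stmt11Aux

open Stmt11Aux Topology in
/-- the unreduced mapping cone of a map into a Dold space is Dold. -/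
theorem stmt11 {A X : Type u} [TopologicalSpace A] [TopologicalSpace X]
    (f : A → X) (hf : Continuous f) (hX : IsDoldSpace X) :
    IsDoldSpace (UnreducedMappingCone f) := by
  classical
  obtain ⟨ι₀, U, hcov, ⟨φP, ⟨hφc, hφm, hφs⟩, hφlf, hφsub⟩, hctr⟩ := hX
  rcases isEmpty_or_nonempty (UnreducedMappingCone f) with hE | hne
  · exact ⟨PEmpty.{u + 1}, fun i => i.elim, fun x => hE.elim x,
      ⟨fun i => i.elim, ⟨fun i => i.elim, fun i => i.elim, fun x => hE.elim x⟩,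
        fun x => hE.elim x, fun i => i.elim⟩, fun i => i.elim⟩
  set K : ι₀ → Set X := fun i => closure (Function.support (φP i)) with hK
  refine ⟨Option ι₀, fun o => o.elim (bigW f) (fun i => bigV f (U i)), ?_, ?_, ?_⟩
  · -- covering
    intro c
    obtain ⟨u, rfl⟩ := Quot.exists_rep c
    rcases u with x | ⟨a, t⟩
    · obtain ⟨i, hi⟩ := hcov x
      exact ⟨some i, Sum.inl x, Or.inl ⟨x, hi, rfl⟩, rfl⟩
    · by_cases h34 : (t : ℝ) ≤ 3 / 4
      · exact ⟨none, Sum.inr (a, t), ⟨(a, t), ⟨trivial, h34⟩, rfl⟩, rfl⟩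
      · obtain ⟨i, hi⟩ := hcov (f a)
        push_neg at h34
        exact ⟨some i, Sum.inr (a, t), Or.inr ⟨(a, t), ⟨hi, by
          show 1 / 3 < (t : ℝ); linarith⟩, rfl⟩, rfl⟩
  · -- numerable cover
    refine ⟨psi f φP, ⟨?_, ?_, ?_⟩, ?_, ?_⟩
    · -- continuity
      rintro (_ | i)
      · exact continuous_quot_lift _ (Continuous.sumElim continuous_const
          (lam_continuous.comp continuous_snd))
      · exact continuous_quot_lift _ (Continuous.sumElim (hφc i)
          ((continuous_const.sub (lam_continuous.comp continuous_snd)).mul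
            ((hφc i).comp (hf.comp continuous_fst))))
    · -- bounds
      intro o c
      obtain ⟨u, rfl⟩ := Quot.exists_rep c
      rcases o with _ | i <;> rcases u with x | ⟨a, t⟩
      · rw [psi_none_inl]
        exact Set.mem_Icc.2 ⟨le_rfl, zero_le_one⟩
      · rw [psi_none_inr]
        exact Set.mem_Icc.2 ⟨lam_nonneg t, lam_le_one t⟩
      · rw [psi_some_inl]
        exact hφm i x
      · rw [psi_some_inr]
        obtain ⟨h1, h2⟩ := Set.mem_Icc.1 (hφm i (f a))
        have hl1 := lam_nonneg t
        have hl2 := lam_le_one t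
        exact Set.mem_Icc.2 ⟨by nlinarith, by nlinarith⟩
    · -- has sum one
      intro c
      obtain ⟨u, rfl⟩ := Quot.exists_rep c
      rcases u with x | ⟨a, t⟩
      · have h := hasSum_option (fun o => psi f φP o (Quot.mk _ (Sum.inl x)))
          (by simpa only [psi_some_inl] using hφs x)
        simpa only [psi_none_inl, zero_add] using h
      · have h0 : HasSum (fun i => psi f φP (some i) (Quot.mk _ (Sum.inr (a, t))))
            ((1 - lam t) * 1) := by
          simpa only [psi_some_inr] using (hφs (f a)).mul_left (1 - lam t)
        have h := hasSum_option (fun o => psi f φP o (Quot.mk _ (Sum.inr (a, t)))) h0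
        have he : psi f φP none (Quot.mk _ (Sum.inr (a, t))) + (1 - lam t) * 1 = 1 := by
          rw [psi_none_inr]; ring
        rwa [he] at h
    · -- locally finite
      have key : ∀ (N : Set X) (P : Set I), (1 : I) ∈ P → (0 : I) ∉ P →
          {i : ι₀ | (K i ∩ N).Nonempty}.Finite →
          {o : Option ι₀ | (closure (Function.support (psi f φP o)) ∩
            (Quot.mk (MappingConeRel f) '' SAbove f N P)).Nonempty}.Finite := by
        intro N P hP1 hP0 hfin
        refine ((hfin.image some).insert none).subset ?_
        rintro (_ | i) ho
        · exact Set.mem_insert _ _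
        · refine Set.mem_insert_of_mem _ ⟨i, ?_, rfl⟩
          obtain ⟨c, hc1, hc2⟩ := ho
          obtain ⟨w, hw, rfl⟩ := closure_supp_some_subset f hf φP i hc1
          have hwM : w ∈ SAbove f N P := by
            have hmem : w ∈ Quot.mk (MappingConeRel f) ⁻¹'
                (Quot.mk (MappingConeRel f) '' SAbove f N P) := hc2
            rwa [sat_preimage f (sat_SAbove f N P hP1 hP0)] at hmem
          rcases hw with ⟨y, hy, hyw⟩ | ⟨⟨a, t⟩, ⟨ha, -⟩, hyw⟩
          · subst hyw
            rcases hwM with ⟨y', hy', h⟩ | ⟨p, -, h⟩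
            · obtain rfl : y' = y := Sum.inl.inj h
              exact ⟨y', hy, hy'⟩
            · exact absurd h (by simp)
          · subst hyw
            rcases hwM with ⟨y', -, h⟩ | ⟨⟨a', t'⟩, ⟨ha', -⟩, h⟩
            · exact absurd h (by simp)
            · obtain rfl : a' = a := congrArg Prod.fst (Sum.inr.inj h)
              exact ⟨f a', ha, ha'⟩
      intro c
      obtain ⟨u, rfl⟩ := Quot.exists_rep c
      rcases u with x | ⟨a, t⟩
      · obtain ⟨N, hN, hfin⟩ := hφlf x
        refine ⟨Quot.mk _ '' SAbove f (interior N) {t : I | 1 / 3 < (t : ℝ)},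
          IsOpen.mem_nhds ?_ ⟨Sum.inl x, Or.inl ⟨x, mem_interior_iff_mem_nhds.2 hN, rfl⟩, rfl⟩,
          key _ _ (by norm_num) (by norm_num)
            (hfin.subset fun i ⟨y, hy1, hy2⟩ => ⟨y, hy1, interior_subset hy2⟩)⟩
        exact isOpen_image_sat f (sat_SAbove f _ _ (by norm_num) (by norm_num))
          (isOpen_SAbove f hf _ isOpen_interior _
            (isOpen_lt continuous_const continuous_subtype_val))
      · by_cases hlt : (t : ℝ) < 2 / 5
        · refine ⟨Quot.mk _ '' SLow {t : I | (t : ℝ) < 2 / 5},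
            IsOpen.mem_nhds ?_ ⟨Sum.inr (a, t), ⟨(a, t), ⟨trivial, hlt⟩, rfl⟩, rfl⟩, ?_⟩
          · exact isOpen_image_sat f (sat_SLow f _ (by norm_num) (by norm_num))
              (IsOpenEmbedding.inr.isOpenMap _
                (isOpen_univ.prod (isOpen_lt continuous_subtype_val continuous_const)))
          · refine (Set.finite_singleton none).subset ?_
            rintro (_ | i) ho
            · exact Set.mem_singleton _
            · exfalso
              obtain ⟨c', hc1, hc2⟩ := ho
              obtain ⟨w, hw, rfl⟩ := closure_supp_some_subset f hf φP i hc1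
              have hwM : w ∈ SLow (A := A) (X := X) {t : I | (t : ℝ) < 2 / 5} := by
                have hmem : w ∈ Quot.mk (MappingConeRel f) ⁻¹'
                    (Quot.mk (MappingConeRel f) '' SLow {t : I | (t : ℝ) < 2 / 5}) := hc2
                rwa [sat_preimage f (sat_SLow f _ (by norm_num) (by norm_num))] at hmem
              obtain ⟨⟨a', t'⟩, ⟨-, ht'⟩, hw'⟩ := hwM
              rcases hw with ⟨y, -, hyw⟩ | ⟨⟨a'', t''⟩, ⟨-, ht''⟩, hyw⟩
              · rw [← hyw] at hw'; simp at hw'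
              · rw [← hyw] at hw'
                obtain rfl : t' = t'' := congrArg Prod.snd (Sum.inr.inj hw')
                have h1 : (t' : ℝ) < 2 / 5 := ht'
                have h2 : 2 / 5 ≤ (t' : ℝ) := ht''
                linarith
        · push_neg at hlt
          obtain ⟨N, hN, hfin⟩ := hφlf (f a)
          refine ⟨Quot.mk _ '' SAbove f (interior N) {t : I | 0 < (t : ℝ)},
            IsOpen.mem_nhds ?_ ⟨Sum.inr (a, t), Or.inr ⟨(a, t),
              ⟨mem_interior_iff_mem_nhds.2 hN, by show 0 < (t : ℝ); linarith⟩, rfl⟩, rfl⟩,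
            key _ _ (by norm_num) (by norm_num)
              (hfin.subset fun i ⟨y, hy1, hy2⟩ => ⟨y, hy1, interior_subset hy2⟩)⟩
          exact isOpen_image_sat f (sat_SAbove f _ _ (by norm_num) (by norm_num))
            (isOpen_SAbove f hf _ isOpen_interior _
              (isOpen_lt continuous_const continuous_subtype_val))
    · -- subordination
      rintro (_ | i)
      · exact closure_supp_none_subset f φP
      · exact (closure_supp_some_subset f hf φP i).trans (bigT_subset_bigV f _ _ (hφsub i))
  · -- contractibility
    rintro (_ | i)
    · show AmbientlyContractible (bigW f)
      rcases isEmpty_or_nonempty A with hA | hA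
      · have hW : bigW f = ∅ := by
          refine Set.eq_empty_iff_forall_notMem.2 ?_
          rintro c ⟨w, ⟨⟨a, t⟩, -, -⟩, -⟩
          exact hA.elim a
        obtain ⟨c₀⟩ := hne
        refine ⟨c₀, ?_⟩
        have hIE : IsEmpty ↥(bigW f) := by rw [hW]; infer_instance
        have hmaps : (⟨Subtype.val, continuous_subtype_val⟩ :
            C(↥(bigW f), UnreducedMappingCone f)) = ContinuousMap.const _ c₀ :=
          ContinuousMap.ext fun v => hIE.elim v
        show ContinuousMap.Homotopic _ _
        rw [hmaps]
      · exact ambient_bigW f hA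
    · exact ambient_bigV f hf (U i) (hctr i)
end
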